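/- arXiv:1205.3982 — 3 statements merged into one kernel-verified Lean document; each statement's English description precedes it below -/
import Mathlib

section
/- Let n, m ≥ 1, let v_i(j) ≥ 0 be the value of item j to player i, and write v_k(s,t) = Σ_{j=s}^t v_k(j). Suppose u_1, …, u_n are nonnegative reals and x_i^j ∈ {0,1} are indicators satisfying: (i) Σ_{i=1}^n Σ_{j=1}^m x_i^j · v_i(j) ≤ 2 · Σ_{i=1}^n u_i; and (ii) for every player k and every segment 1 ≤ s ≤ t ≤ m, v_k(s,t) ≤ 2 · ( Σ_{j=1}^m x_k^j · v_k(j) + Σ_{j=s}^t Σ_{i≠k} x_i^j · v_i(j) ). Then for every family {(s_k, t_k)}_{k=1}^n of pairwise disjoint segments, Σ_{k=1}^n v_k(s_k, t_k) ≤ 8 · Σ_{i=1}^n u_i. (This inequality is the content of the proof that Algorithm 2 returns an 8-approximation of the discrete utilitarian welfare optimum.) -/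
/-- the key inequality behind the 8-approximation for discrete
utilitarian welfare (Algorithm 2). Items are `1, …, m`, players `Fin n`. -/
theorem stmt_0 (n m : ℕ) (hn : 1 ≤ n) (hm : 1 ≤ m)
    (v : Fin n → ℕ → ℝ) (hv : ∀ i j, 0 ≤ v i j)
    (u : Fin n → ℝ) (hu : ∀ i, 0 ≤ u i)
    (x : Fin n → ℕ → ℝ) (hx : ∀ i j, x i j = 0 ∨ x i j = 1)
    (h1 : ∑ i, ∑ j ∈ Finset.Icc 1 m, x i j * v i j ≤ 2 * ∑ i, u i)
    (h2 : ∀ (k : Fin n) (s t : ℕ), 1 ≤ s → s ≤ t → t ≤ m →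
      ∑ j ∈ Finset.Icc s t, v k j ≤
        2 * ((∑ j ∈ Finset.Icc 1 m, x k j * v k j) +
          ∑ j ∈ Finset.Icc s t, ∑ i ∈ Finset.univ.erase k, x i j * v i j))
    (s t : Fin n → ℕ)
    (hseg : ∀ k, 1 ≤ s k ∧ s k ≤ t k ∧ t k ≤ m)
    (hdisj : ∀ k k', k ≠ k' →
      Disjoint (Finset.Icc (s k) (t k)) (Finset.Icc (s k') (t k'))) :
    ∑ k, ∑ j ∈ Finset.Icc (s k) (t k), v k j ≤ 8 * ∑ i, u i := by
  have hxv : ∀ i j, 0 ≤ x i j * v i j := by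
    intro i j
    rcases hx i j with h | h <;> simp [h, hv i j]
  -- bound each term via h2 and sum
  have step1 : ∑ k, ∑ j ∈ Finset.Icc (s k) (t k), v k j ≤
      2 * ((∑ k, ∑ j ∈ Finset.Icc 1 m, x k j * v k j) +
        ∑ k, ∑ j ∈ Finset.Icc (s k) (t k), ∑ i ∈ Finset.univ.erase k, x i j * v i j) := by
    calc ∑ k, ∑ j ∈ Finset.Icc (s k) (t k), v k j
        ≤ ∑ k : Fin n, 2 * ((∑ j ∈ Finset.Icc 1 m, x k j * v k j) +
            ∑ j ∈ Finset.Icc (s k) (t k), ∑ i ∈ Finset.univ.erase k, x i j * v i j) := by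
          apply Finset.sum_le_sum
          intro k _
          exact h2 k (s k) (t k) (hseg k).1 (hseg k).2.1 (hseg k).2.2
      _ = _ := by
          rw [← Finset.mul_sum, Finset.sum_add_distrib]
  -- the cross sum: swap to sum over i
  have swap : ∑ k, ∑ j ∈ Finset.Icc (s k) (t k), ∑ i ∈ Finset.univ.erase k, x i j * v i j
      = ∑ i, ∑ k ∈ Finset.univ.erase i, ∑ j ∈ Finset.Icc (s k) (t k), x i j * v i j := by
    have e : ∀ (k : Fin n) (F : Fin n → ℝ),
        ∑ i ∈ Finset.univ.erase k, F i = ∑ i, if i ≠ k then F i else 0 := by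
      intro k F
      rw [← Finset.filter_ne', Finset.sum_filter]
    calc ∑ k, ∑ j ∈ Finset.Icc (s k) (t k), ∑ i ∈ Finset.univ.erase k, x i j * v i j
        = ∑ k, ∑ i ∈ Finset.univ.erase k, ∑ j ∈ Finset.Icc (s k) (t k), x i j * v i j :=
          Finset.sum_congr rfl fun k _ => Finset.sum_comm
      _ = ∑ k : Fin n, ∑ i : Fin n,
            if i ≠ k then ∑ j ∈ Finset.Icc (s k) (t k), x i j * v i j else 0 :=
          Finset.sum_congr rfl fun k _ => e k _
      _ = ∑ i : Fin n, ∑ k : Fin n,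
            if i ≠ k then ∑ j ∈ Finset.Icc (s k) (t k), x i j * v i j else 0 :=
          Finset.sum_comm
      _ = ∑ i, ∑ k ∈ Finset.univ.erase i, ∑ j ∈ Finset.Icc (s k) (t k), x i j * v i j := by
          refine Finset.sum_congr rfl fun i _ => ?_
          rw [e i]
          exact Finset.sum_congr rfl fun k _ => if_congr ne_comm rfl rfl
  have cross_le : ∀ i : Fin n,
      ∑ k ∈ Finset.univ.erase i, ∑ j ∈ Finset.Icc (s k) (t k), x i j * v i j
        ≤ ∑ j ∈ Finset.Icc 1 m, x i j * v i j := by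
    intro i
    have hpd : (↑(Finset.univ.erase i) : Set (Fin n)).PairwiseDisjoint
        (fun k => Finset.Icc (s k) (t k)) := by
      intro a _ b _ hab
      exact hdisj a b hab
    rw [← Finset.sum_biUnion hpd]
    apply Finset.sum_le_sum_of_subset_of_nonneg
    · intro j hj
      rcases Finset.mem_biUnion.mp hj with ⟨k, _, hjk⟩
      rw [Finset.mem_Icc] at hjk ⊢
      exact ⟨le_trans (hseg k).1 hjk.1, le_trans hjk.2 (hseg k).2.2⟩
    · intro j _ _
      exact hxv i j
  have cross_total : ∑ k, ∑ j ∈ Finset.Icc (s k) (t k),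
      ∑ i ∈ Finset.univ.erase k, x i j * v i j ≤ 2 * ∑ i, u i := by
    rw [swap]
    calc ∑ i, ∑ k ∈ Finset.univ.erase i, ∑ j ∈ Finset.Icc (s k) (t k), x i j * v i j
        ≤ ∑ i, ∑ j ∈ Finset.Icc 1 m, x i j * v i j :=
          Finset.sum_le_sum fun i _ => cross_le i
      _ ≤ 2 * ∑ i, u i := h1
  calc ∑ k, ∑ j ∈ Finset.Icc (s k) (t k), v k j
      ≤ 2 * ((∑ k, ∑ j ∈ Finset.Icc 1 m, x k j * v k j) +
        ∑ k, ∑ j ∈ Finset.Icc (s k) (t k), ∑ i ∈ Finset.univ.erase k, x i j * v i j) := step1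
    _ ≤ 2 * (2 * ∑ i, u i + 2 * ∑ i, u i) := by
        apply mul_le_mul_of_nonneg_left (add_le_add h1 cross_total) (by norm_num)
    _ = 8 * ∑ i, u i := by ring
end

section
/- In the cake instance constructed from a 3-Dimensional Matching instance (X, Y, Z, E): if there exists E' ⊆ E with |E'| = n' such that every element of X ∪ Y ∪ Z is a coordinate of some triple in E', then there exists a connected division in which every player's utility is at least 1/M. (Completeness direction of the reduction proving that maximizing egalitarian welfare with connected pieces is NP-hard and hard to approximate within any factor smaller than 2.) -/
open MeasureTheory Set
open scoped ENNReal

/-- The set of coordinates of a triple. -/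
def coords {α : Type*} [DecidableEq α] (t : α × α × α) : Finset α :=
  {t.1, t.2.1, t.2.2}

/-- `mult e w` is the number of triples in the list `e` having `w` as a
coordinate. -/
def mult {α : Type*} [DecidableEq α] {M : ℕ} (e : Fin M → α × α × α) (w : α) : ℕ :=
  (Finset.univ.filter fun i => w ∈ coords (e i)).card

/-- Density of a uniform block: total value `c` spread uniformly over the
interval `(a, b)`. -/
noncomputable def unif (a b c : ℝ) : ℝ → ℝ≥0∞ :=
  (Ioo a b).indicator fun _ => ENNReal.ofReal (c / (b - a))

/-- The compensation-range density common to all non-separation players: total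
value `(M - mw)/(2M²)` on each of the intervals `(2j+6/5, 2j+7/5)` and
`(2j+8/5, 2j+9/5)` of the `j`-th section (sections indexed from 0). -/
noncomputable def compDensity (M : ℕ) (mw : ℕ) : ℝ → ℝ≥0∞ := fun t =>
  ∑ j : Fin M,
    (unif (2 * (j : ℝ) + 6 / 5) (2 * (j : ℝ) + 7 / 5)
        (((M : ℝ) - mw) / (2 * (M : ℝ) ^ 2)) t +
      unif (2 * (j : ℝ) + 8 / 5) (2 * (j : ℝ) + 9 / 5)
        (((M : ℝ) - mw) / (2 * (M : ℝ) ^ 2)) t)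

/-- The players of the instance built from a 3DM instance: one triplet player
per `z ∈ Z`, `m_x - 1` ground-set players per `x ∈ X`, `m_y - 1` ground-set
players per `y ∈ Y`, and three separation players per triple. -/
abbrev DMPlayer {α : Type*} [DecidableEq α] (X Y Z : Finset α) {M : ℕ}
    (e : Fin M → α × α × α) : Type _ :=
  {z // z ∈ Z} ⊕ ((Σ x : {x // x ∈ X}, Fin (mult e x.1 - 1)) ⊕
    ((Σ y : {y // y ∈ Y}, Fin (mult e y.1 - 1)) ⊕ (Fin M × Fin 3)))

/-- The value density function of each player in the reduction. -/
noncomputable def dmDensity {α : Type*} [DecidableEq α] (X Y Z : Finset α)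
    {M : ℕ} (e : Fin M → α × α × α) : DMPlayer X Y Z e → ℝ → ℝ≥0∞
  | Sum.inl z => fun t =>
      (∑ i : Fin M,
        if z.1 ∈ coords (e i) then
          unif (2 * (i : ℝ)) (2 * (i : ℝ) + 1 / 4) (1 / (2 * (M : ℝ))) t +
            unif (2 * (i : ℝ) + 3 / 4) (2 * (i : ℝ) + 1) (1 / (2 * (M : ℝ))) t
        else 0) + compDensity M (mult e z.1) t
  | Sum.inr (Sum.inl ⟨x, _⟩) => fun t =>
      (∑ i : Fin M,
        if x.1 ∈ coords (e i) then
          unif (2 * (i : ℝ) + 1 / 4) (2 * (i : ℝ) + 1 / 2) (1 / (M : ℝ)) t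
        else 0) + compDensity M (mult e x.1) t
  | Sum.inr (Sum.inr (Sum.inl ⟨y, _⟩)) => fun t =>
      (∑ i : Fin M,
        if y.1 ∈ coords (e i) then
          unif (2 * (i : ℝ) + 1 / 2) (2 * (i : ℝ) + 3 / 4) (1 / (M : ℝ)) t
        else 0) + compDensity M (mult e y.1) t
  | Sum.inr (Sum.inr (Sum.inr (i, k))) => fun t =>
      if k = 0 then unif (2 * (i : ℝ) + 1) (2 * (i : ℝ) + 6 / 5) 1 t
      else if k = 1 then unif (2 * (i : ℝ) + 7 / 5) (2 * (i : ℝ) + 8 / 5) 1 t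
      else unif (2 * (i : ℝ) + 9 / 5) (2 * (i : ℝ) + 2) 1 t

/-- The valuation measure of each player in the reduction. -/
noncomputable def dmMeas {α : Type*} [DecidableEq α] (X Y Z : Finset α)
    {M : ℕ} (e : Fin M → α × α × α) (p : DMPlayer X Y Z e) : Measure ℝ :=
  MeasureTheory.volume.withDensity (dmDensity X Y Z e p)

namespace DM3Aux

/-- Interval partition list: consecutive labelled intervals from `a` to `b`. -/
def IPL {P : Type*} : List (P × ℝ × ℝ) → ℝ → ℝ → Prop
  | [] => fun a b => a = b
  | q :: t => fun a b => q.2.1 = a ∧ IPL t q.2.2 b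

theorem ipl_append {P : Type*} : ∀ {l1 l2 : List (P × ℝ × ℝ)} {a b c : ℝ},
    IPL l1 a b → IPL l2 b c → IPL (l1 ++ l2) a c
  | [], l2, a, b, c, h1, h2 => by
      rw [List.nil_append]; rwa [show a = b from h1]
  | q :: t, l2, a, b, c, h1, h2 => ⟨h1.1, ipl_append h1.2 h2⟩

theorem ipl_zero {P : Type*} {l : List (P × ℝ × ℝ)} {a b : ℝ} (h : IPL l a b)
    (hl : 0 < l.length) : (l.get ⟨0, hl⟩).2.1 = a := by
  cases l with
  | nil => simp at hl
  | cons q t => exact h.1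

theorem ipl_get {P : Type*} : ∀ {l : List (P × ℝ × ℝ)} {a b : ℝ}, IPL l a b →
    ∀ (k : ℕ) (h : k < l.length), (l.get ⟨k, h⟩).2.2 =
      if h' : k + 1 < l.length then (l.get ⟨k + 1, h'⟩).2.1 else b
  | [], a, b, h, k, hk => by simp at hk
  | q :: t, a, b, h, 0, hk => by
      cases t with
      | nil =>
        rw [dif_neg (by simp)]
        exact h.2
      | cons q' t' =>
        rw [dif_pos (by simp : 0 + 1 < (q :: q' :: t').length)]
        exact (h.2.1).symm
  | q :: t, a, b, h, k + 1, hk => by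
      have hk' : k < t.length := by simpa using hk
      have ih := ipl_get h.2 k hk'
      show (t.get ⟨k, hk'⟩).2.2 = _
      rw [ih]
      by_cases h2 : k + 1 < t.length
      · rw [dif_pos h2, dif_pos (by simpa using Nat.succ_lt_succ h2)]
        rfl
      · rw [dif_neg h2, dif_neg (by simp; omega)]

theorem unif_measurable {a b v : ℝ} : Measurable (unif a b v) :=
  Measurable.indicator measurable_const measurableSet_Ioo

theorem unif_lintegral {a b a' b' v : ℝ} (h1 : a ≤ a') (h2 : a' < b') (h3 : b' ≤ b)
    (hv : 0 ≤ v) : ∫⁻ t in Ioo a b, unif a' b' v t = ENNReal.ofReal v := by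
  have hba : (0:ℝ) < b' - a' := by linarith
  unfold unif
  rw [lintegral_indicator measurableSet_Ioo, setLIntegral_const,
    Measure.restrict_apply measurableSet_Ioo,
    inter_eq_self_of_subset_left (Ioo_subset_Ioo h1 h3), Real.volume_Ioo,
    ← ENNReal.ofReal_mul (div_nonneg hv hba.le), div_mul_cancel₀ _ hba.ne']

theorem le_meas_of_unif {f : ℝ → ℝ≥0∞} {a b a' b' v : ℝ} (h1 : a ≤ a') (h2 : a' < b')
    (h3 : b' ≤ b) (hv : 0 ≤ v) (hle : ∀ t, unif a' b' v t ≤ f t) :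
    ENNReal.ofReal v ≤ (MeasureTheory.volume.withDensity f) (Ioo a b) := by
  rw [MeasureTheory.withDensity_apply _ measurableSet_Ioo, ← unif_lintegral h1 h2 h3 hv]
  exact MeasureTheory.lintegral_mono hle

theorem le_meas_of_two_unif {f : ℝ → ℝ≥0∞} {a b a₁ b₁ a₂ b₂ v : ℝ}
    (h1 : a ≤ a₁) (h2 : a₁ < b₁) (h3 : b₁ ≤ b) (h4 : a ≤ a₂) (h5 : a₂ < b₂) (h6 : b₂ ≤ b)
    (hv : 0 ≤ v) (hle : ∀ t, unif a₁ b₁ v t + unif a₂ b₂ v t ≤ f t) :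
    ENNReal.ofReal v + ENNReal.ofReal v ≤ (MeasureTheory.volume.withDensity f) (Ioo a b) := by
  rw [MeasureTheory.withDensity_apply _ measurableSet_Ioo]
  have h := MeasureTheory.lintegral_mono (μ := MeasureTheory.volume.restrict (Ioo a b)) hle
  rwa [MeasureTheory.lintegral_add_left unif_measurable, unif_lintegral h1 h2 h3 hv,
    unif_lintegral h4 h5 h6 hv] at h

end DM3Aux

/-- Auxiliary rank function: the number of unmatched sections before `i` containing `w`. -/
def rnk {α : Type*} [DecidableEq α] {M : ℕ} (e : Fin M → α × α × α) (E' : Finset (Fin M))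
    (w : α) (i : Fin M) : ℕ :=
  ((Finset.univ : Finset (Fin M)).filter fun i' => i' < i ∧ i' ∉ E' ∧ w ∈ coords (e i')).card

/-- The list of (player, interval) assignments within section `i`. -/
noncomputable def secL {α : Type*} [DecidableEq α] (X Y Z : Finset α) {M : ℕ} (e : Fin M → α × α × α)
    (heX : ∀ i, (e i).1 ∈ X) (heY : ∀ i, (e i).2.1 ∈ Y) (heZ : ∀ i, (e i).2.2 ∈ Z)
    (E' : Finset (Fin M)) (rk : α → Fin M → ℕ) (i : Fin M) :
    List (DMPlayer X Y Z e × ℝ × ℝ) :=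
  if i ∈ E' then
    [(Sum.inl ⟨(e i).2.2, heZ i⟩, 2 * (i : ℝ), 2 * (i : ℝ) + 1),
     (Sum.inr (Sum.inr (Sum.inr (i, 0))), 2 * (i : ℝ) + 1, 2 * (i : ℝ) + 6 / 5),
     (Sum.inr (Sum.inr (Sum.inr (i, 1))), 2 * (i : ℝ) + 6 / 5, 2 * (i : ℝ) + 8 / 5),
     (Sum.inr (Sum.inr (Sum.inr (i, 2))), 2 * (i : ℝ) + 8 / 5, 2 * (i : ℝ) + 2)]
  else if h : rk (e i).1 i < mult e (e i).1 - 1 ∧ rk (e i).2.1 i < mult e (e i).2.1 - 1 then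
    [(Sum.inr (Sum.inl ⟨⟨(e i).1, heX i⟩, ⟨rk (e i).1 i, h.1⟩⟩), 2 * (i : ℝ), 2 * (i : ℝ) + 1 / 2),
     (Sum.inr (Sum.inr (Sum.inl ⟨⟨(e i).2.1, heY i⟩, ⟨rk (e i).2.1 i, h.2⟩⟩)),
        2 * (i : ℝ) + 1 / 2, 2 * (i : ℝ) + 1),
     (Sum.inr (Sum.inr (Sum.inr (i, 0))), 2 * (i : ℝ) + 1, 2 * (i : ℝ) + 6 / 5),
     (Sum.inr (Sum.inr (Sum.inr (i, 1))), 2 * (i : ℝ) + 6 / 5, 2 * (i : ℝ) + 8 / 5),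
     (Sum.inr (Sum.inr (Sum.inr (i, 2))), 2 * (i : ℝ) + 8 / 5, 2 * (i : ℝ) + 2)]
  else []

/-- completeness of the 3DM reduction, Theorem 2: if the 3DM
instance has a perfect matching `E' ⊆ E`, `|E'| = n'`, covering `X ∪ Y ∪ Z`,
then the constructed cake instance admits a connected division in which every
player's utility is at least `1/M`. -/
theorem stmt_1 {α : Type*} [DecidableEq α] (X Y Z : Finset α) (n' M : ℕ)
    (hM : 1 ≤ M) (hX : X.card = n') (hY : Y.card = n') (hZ : Z.card = n')
    (hXY : Disjoint X Y) (hXZ : Disjoint X Z) (hYZ : Disjoint Y Z)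
    (e : Fin M → α × α × α) (he : Function.Injective e)
    (heX : ∀ i, (e i).1 ∈ X) (heY : ∀ i, (e i).2.1 ∈ Y) (heZ : ∀ i, (e i).2.2 ∈ Z)
    (hmult : ∀ w ∈ X ∪ Y ∪ Z, 1 ≤ mult e w)
    (hcover : ∃ E' : Finset (Fin M), E'.card = n' ∧
      ∀ w ∈ X ∪ Y ∪ Z, ∃ i ∈ E', w ∈ coords (e i)) :
    ∃ (c : Fin (Fintype.card (DMPlayer X Y Z e) + 1) → ℝ)
      (σ : Fin (Fintype.card (DMPlayer X Y Z e)) ≃ DMPlayer X Y Z e),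
      Monotone c ∧ c 0 = 0 ∧ c (Fin.last _) = 2 * M ∧
      ∀ p : DMPlayer X Y Z e,
        ((M : ℝ≥0∞))⁻¹ ≤
          dmMeas X Y Z e p (Ioo (c (σ.symm p).castSucc) (c (σ.symm p).succ)) := by
  classical
  obtain ⟨E', hEc, hEcov⟩ := hcover
  have hM0 : (0:ℝ) < (M:ℝ) := by exact_mod_cast hM
  -- membership of coordinates in the union
  have hmem1 : ∀ i : Fin M, (e i).1 ∈ X ∪ Y ∪ Z := fun i =>
    Finset.mem_union_left _ (Finset.mem_union_left _ (heX i))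
  have hmem2 : ∀ i : Fin M, (e i).2.1 ∈ X ∪ Y ∪ Z := fun i =>
    Finset.mem_union_left _ (Finset.mem_union_right _ (heY i))
  have hmem3 : ∀ i : Fin M, (e i).2.2 ∈ X ∪ Y ∪ Z := fun i =>
    Finset.mem_union_right _ (heZ i)
  have hself1 : ∀ i : Fin M, (e i).1 ∈ coords (e i) := fun i => by simp [coords]
  have hself2 : ∀ i : Fin M, (e i).2.1 ∈ coords (e i) := fun i => by simp [coords]
  have hself3 : ∀ i : Fin M, (e i).2.2 ∈ coords (e i) := fun i => by simp [coords]
  -- coordinate characterizations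
  have hcoX : ∀ w ∈ X, ∀ i : Fin M, w ∈ coords (e i) ↔ (e i).1 = w := by
    intro w hw i
    constructor
    · intro h
      simp only [coords, Finset.mem_insert, Finset.mem_singleton] at h
      rcases h with h | h | h
      · exact h.symm
      · exact absurd (by rw [h]; exact heY i) (Finset.disjoint_left.mp hXY hw)
      · exact absurd (by rw [h]; exact heZ i) (Finset.disjoint_left.mp hXZ hw)
    · intro h; simp [coords, ← h]
  have hcoY : ∀ w ∈ Y, ∀ i : Fin M, w ∈ coords (e i) ↔ (e i).2.1 = w := by
    intro w hw i
    constructor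
    · intro h
      simp only [coords, Finset.mem_insert, Finset.mem_singleton] at h
      rcases h with h | h | h
      · exact absurd (by rw [h]; exact heX i) (Finset.disjoint_right.mp hXY hw)
      · exact h.symm
      · exact absurd (by rw [h]; exact heZ i) (Finset.disjoint_left.mp hYZ hw)
    · intro h; simp [coords, ← h]
  have hcoZ : ∀ w ∈ Z, ∀ i : Fin M, w ∈ coords (e i) ↔ (e i).2.2 = w := by
    intro w hw i
    constructor
    · intro h
      simp only [coords, Finset.mem_insert, Finset.mem_singleton] at h
      rcases h with h | h | h
      · exact absurd (by rw [h]; exact heX i) (Finset.disjoint_right.mp hXZ hw)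
      · exact absurd (by rw [h]; exact heY i) (Finset.disjoint_right.mp hYZ hw)
      · exact h.symm
    · intro h; simp [coords, ← h]
  -- injectivity of the coordinate maps on E'
  have hkey : ∀ (W : Finset α) (f : Fin M → α), (∀ i, f i ∈ W) →
      (∀ w ∈ W, w ∈ X ∪ Y ∪ Z) →
      (∀ w ∈ W, ∀ i : Fin M, w ∈ coords (e i) → f i = w) → W.card = n' →
      Set.InjOn f ↑E' := by
    intro W f hf hWu hchar hcard
    have himg : Finset.image f E' = W := by
      apply Finset.Subset.antisymm
      · intro w hw
        obtain ⟨i, _, rfl⟩ := Finset.mem_image.mp hw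
        exact hf i
      · intro w hw
        obtain ⟨i, hiE, hico⟩ := hEcov w (hWu w hw)
        exact Finset.mem_image.mpr ⟨i, hiE, hchar w hw i hico⟩
    exact Finset.card_image_iff.mp (by rw [himg, hcard, hEc])
  have hinjX : Set.InjOn (fun i => (e i).1) ↑E' :=
    hkey X (fun i => (e i).1) heX (fun w hw => Finset.mem_union_left _ (Finset.mem_union_left _ hw))
      (fun w hw i hc => (hcoX w hw i).mp hc) hX
  have hinjY : Set.InjOn (fun i => (e i).2.1) ↑E' :=
    hkey Y (fun i => (e i).2.1) heY (fun w hw => Finset.mem_union_left _ (Finset.mem_union_right _ hw))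
      (fun w hw i hc => (hcoY w hw i).mp hc) hY
  have hinjZ : Set.InjOn (fun i => (e i).2.2) ↑E' :=
    hkey Z (fun i => (e i).2.2) heZ (fun w hw => Finset.mem_union_right _ hw)
      (fun w hw i hc => (hcoZ w hw i).mp hc) hZ
  -- rank lemmas
  have hrk_lt : ∀ (w : α), w ∈ X ∪ Y ∪ Z → ∀ i : Fin M, i ∉ E' → w ∈ coords (e i) →
      rnk e E' w i < mult e w - 1 := by
    intro w hw i hiE hico
    obtain ⟨i', hi'E, hi'co⟩ := hEcov w hw
    have hne : i ≠ i' := fun h => hiE (h ▸ hi'E)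
    have hpair : ({i, i'} : Finset (Fin M)) ⊆
        (Finset.univ : Finset (Fin M)).filter (fun j => w ∈ coords (e j)) := by
      intro j hj
      rcases Finset.mem_insert.mp hj with rfl | hj
      · exact Finset.mem_filter.mpr ⟨Finset.mem_univ _, hico⟩
      · rw [Finset.mem_singleton.mp hj]
        exact Finset.mem_filter.mpr ⟨Finset.mem_univ _, hi'co⟩
    have hsub : ((Finset.univ : Finset (Fin M)).filter fun j => j < i ∧ j ∉ E' ∧ w ∈ coords (e j))
        ⊆ ((Finset.univ : Finset (Fin M)).filter (fun j => w ∈ coords (e j))) \ {i, i'} := by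
      intro j hj
      obtain ⟨-, hj1, hj2, hj3⟩ := Finset.mem_filter.mp hj
      refine Finset.mem_sdiff.mpr ⟨Finset.mem_filter.mpr ⟨Finset.mem_univ _, hj3⟩, ?_⟩
      simp only [Finset.mem_insert, Finset.mem_singleton]
      push_neg
      exact ⟨ne_of_lt hj1, fun h => hj2 (h ▸ hi'E)⟩
    have h2S : 2 ≤ ((Finset.univ : Finset (Fin M)).filter (fun j => w ∈ coords (e j))).card := by
      calc 2 = ({i, i'} : Finset (Fin M)).card := (Finset.card_pair hne).symm
        _ ≤ _ := Finset.card_le_card hpair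
    have hle := Finset.card_le_card hsub
    rw [Finset.card_sdiff_of_subset hpair, Finset.card_pair hne] at hle
    have hmm : mult e w = ((Finset.univ : Finset (Fin M)).filter (fun j => w ∈ coords (e j))).card := rfl
    unfold rnk
    omega
  have hrk_mono : ∀ (w : α) (i j : Fin M), i < j → i ∉ E' → w ∈ coords (e i) →
      rnk e E' w i < rnk e E' w j := by
    intro w i j hij hiE hico
    have h1 : insert i ((Finset.univ : Finset (Fin M)).filter
          fun i' => i' < i ∧ i' ∉ E' ∧ w ∈ coords (e i'))
        ⊆ (Finset.univ : Finset (Fin M)).filter fun i' => i' < j ∧ i' ∉ E' ∧ w ∈ coords (e i') := by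
      intro k hk
      rcases Finset.mem_insert.mp hk with rfl | hk
      · exact Finset.mem_filter.mpr ⟨Finset.mem_univ _, hij, hiE, hico⟩
      · obtain ⟨-, hk1, hk2, hk3⟩ := Finset.mem_filter.mp hk
        exact Finset.mem_filter.mpr ⟨Finset.mem_univ _, lt_trans hk1 hij, hk2, hk3⟩
    have h2 : i ∉ (Finset.univ : Finset (Fin M)).filter
        fun i' => i' < i ∧ i' ∉ E' ∧ w ∈ coords (e i') := by
      simp [lt_irrefl]
    unfold rnk
    calc ((Finset.univ : Finset (Fin M)).filter
          fun i' => i' < i ∧ i' ∉ E' ∧ w ∈ coords (e i')).card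
        < (insert i ((Finset.univ : Finset (Fin M)).filter
          fun i' => i' < i ∧ i' ∉ E' ∧ w ∈ coords (e i'))).card := by
          rw [Finset.card_insert_of_notMem h2]; omega
      _ ≤ _ := Finset.card_le_card h1
  have hcond : ∀ i : Fin M, i ∉ E' →
      rnk e E' (e i).1 i < mult e (e i).1 - 1 ∧ rnk e E' (e i).2.1 i < mult e (e i).2.1 - 1 :=
    fun i hi => ⟨hrk_lt _ (hmem1 i) i hi (hself1 i), hrk_lt _ (hmem2 i) i hi (hself2 i)⟩
  -- section list equations
  have hsecM : ∀ i ∈ E', secL X Y Z e heX heY heZ E' (rnk e E') i =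
      [(Sum.inl ⟨(e i).2.2, heZ i⟩, 2 * (i : ℝ), 2 * (i : ℝ) + 1),
       (Sum.inr (Sum.inr (Sum.inr (i, 0))), 2 * (i : ℝ) + 1, 2 * (i : ℝ) + 6 / 5),
       (Sum.inr (Sum.inr (Sum.inr (i, 1))), 2 * (i : ℝ) + 6 / 5, 2 * (i : ℝ) + 8 / 5),
       (Sum.inr (Sum.inr (Sum.inr (i, 2))), 2 * (i : ℝ) + 8 / 5, 2 * (i : ℝ) + 2)] := by
    intro i hi; unfold secL; rw [if_pos hi]
  have hsecU : ∀ i : Fin M, (hi : i ∉ E') → secL X Y Z e heX heY heZ E' (rnk e E') i =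
      [(Sum.inr (Sum.inl ⟨⟨(e i).1, heX i⟩, ⟨rnk e E' (e i).1 i, (hcond i hi).1⟩⟩),
          2 * (i : ℝ), 2 * (i : ℝ) + 1 / 2),
       (Sum.inr (Sum.inr (Sum.inl ⟨⟨(e i).2.1, heY i⟩, ⟨rnk e E' (e i).2.1 i, (hcond i hi).2⟩⟩)),
          2 * (i : ℝ) + 1 / 2, 2 * (i : ℝ) + 1),
       (Sum.inr (Sum.inr (Sum.inr (i, 0))), 2 * (i : ℝ) + 1, 2 * (i : ℝ) + 6 / 5),
       (Sum.inr (Sum.inr (Sum.inr (i, 1))), 2 * (i : ℝ) + 6 / 5, 2 * (i : ℝ) + 8 / 5),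
       (Sum.inr (Sum.inr (Sum.inr (i, 2))), 2 * (i : ℝ) + 8 / 5, 2 * (i : ℝ) + 2)] := by
    intro i hi; unfold secL; rw [if_neg hi, dif_pos (hcond i hi)]
  -- per-section facts
  have hsec_ipl : ∀ i : Fin M,
      DM3Aux.IPL (secL X Y Z e heX heY heZ E' (rnk e E') i) (2 * (i : ℝ)) (2 * (i : ℝ) + 2) := by
    intro i
    by_cases hi : i ∈ E'
    · rw [hsecM i hi]; simp [DM3Aux.IPL]
    · rw [hsecU i hi]; simp [DM3Aux.IPL]
  have hsec_len : ∀ i : Fin M,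
      (secL X Y Z e heX heY heZ E' (rnk e E') i).length = if i ∈ E' then 4 else 5 := by
    intro i
    by_cases hi : i ∈ E'
    · rw [hsecM i hi, if_pos hi]; rfl
    · rw [hsecU i hi, if_neg hi]; rfl
  have hsec_nodup : ∀ i : Fin M,
      ((secL X Y Z e heX heY heZ E' (rnk e E') i).map Prod.fst).Nodup := by
    intro i
    by_cases hi : i ∈ E'
    · rw [hsecM i hi]
      simp [List.nodup_cons, Prod.ext_iff]
    · rw [hsecU i hi]
      simp [List.nodup_cons, Prod.ext_iff]
  have hsec_mem : ∀ (i : Fin M) (p : DMPlayer X Y Z e),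
      p ∈ (secL X Y Z e heX heY heZ E' (rnk e E') i).map Prod.fst →
      (i ∈ E' ∧ p = Sum.inl ⟨(e i).2.2, heZ i⟩) ∨
      (i ∉ E' ∧ ∃ h1, p = Sum.inr (Sum.inl ⟨⟨(e i).1, heX i⟩, ⟨rnk e E' (e i).1 i, h1⟩⟩)) ∨
      (i ∉ E' ∧ ∃ h2, p = Sum.inr (Sum.inr (Sum.inl ⟨⟨(e i).2.1, heY i⟩,
          ⟨rnk e E' (e i).2.1 i, h2⟩⟩))) ∨
      (∃ k, p = Sum.inr (Sum.inr (Sum.inr (i, k)))) := by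
    intro i p hp
    by_cases hi : i ∈ E'
    · rw [hsecM i hi] at hp
      simp only [List.map_cons, List.map_nil, List.mem_cons, List.not_mem_nil, or_false] at hp
      rcases hp with rfl | rfl | rfl | rfl
      · exact Or.inl ⟨hi, rfl⟩
      all_goals exact Or.inr (Or.inr (Or.inr ⟨_, rfl⟩))
    · rw [hsecU i hi] at hp
      simp only [List.map_cons, List.map_nil, List.mem_cons, List.not_mem_nil, or_false] at hp
      rcases hp with rfl | rfl | rfl | rfl | rfl
      · exact Or.inr (Or.inl ⟨hi, _, rfl⟩)
      · exact Or.inr (Or.inr (Or.inl ⟨hi, _, rfl⟩))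
      all_goals exact Or.inr (Or.inr (Or.inr ⟨_, rfl⟩))
  have hdisj : ∀ i j : Fin M, i ≠ j →
      List.Disjoint ((secL X Y Z e heX heY heZ E' (rnk e E') i).map Prod.fst)
        ((secL X Y Z e heX heY heZ E' (rnk e E') j).map Prod.fst) := by
    intro i j hij
    rw [List.disjoint_left]
    intro p hpi hpj
    rcases hsec_mem i p hpi with ⟨hiE, rfl⟩ | ⟨hiE, h1, rfl⟩ | ⟨hiE, h2, rfl⟩ | ⟨k, rfl⟩
    · rcases hsec_mem j _ hpj with ⟨hjE, hq⟩ | ⟨hjE, h1', hq⟩ | ⟨hjE, h2', hq⟩ | ⟨k', hq⟩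
      · have hz : (e i).2.2 = (e j).2.2 := Subtype.ext_iff.mp (Sum.inl.inj hq)
        exact hij (hinjZ (Finset.mem_coe.mpr hiE) (Finset.mem_coe.mpr hjE) hz)
      all_goals simp at hq
    · rcases hsec_mem j _ hpj with ⟨hjE, hq⟩ | ⟨hjE, h1', hq⟩ | ⟨hjE, h2', hq⟩ | ⟨k', hq⟩
      · simp at hq
      · have hs2 := Sum.inl.inj (Sum.inr.inj hq)
        have hw : (e i).1 = (e j).1 := congrArg (fun q => (q.1 : α)) hs2
        have hr : rnk e E' (e i).1 i = rnk e E' (e j).1 j := congrArg (fun q => (q.2 : ℕ)) hs2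
        rw [← hw] at hr
        rcases hij.lt_or_gt with h | h
        · have := hrk_mono (e i).1 i j h hiE (hself1 i)
          omega
        · have hj1 : (e i).1 ∈ coords (e j) := by rw [hw]; exact hself1 j
          have := hrk_mono (e i).1 j i h hjE hj1
          omega
      all_goals simp at hq
    · rcases hsec_mem j _ hpj with ⟨hjE, hq⟩ | ⟨hjE, h1', hq⟩ | ⟨hjE, h2', hq⟩ | ⟨k', hq⟩
      · simp at hq
      · simp at hq
      · have hs2 := Sum.inl.inj (Sum.inr.inj (Sum.inr.inj hq))
        have hw : (e i).2.1 = (e j).2.1 := congrArg (fun q => (q.1 : α)) hs2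
        have hr : rnk e E' (e i).2.1 i = rnk e E' (e j).2.1 j := congrArg (fun q => (q.2 : ℕ)) hs2
        rw [← hw] at hr
        rcases hij.lt_or_gt with h | h
        · have := hrk_mono (e i).2.1 i j h hiE (hself2 i)
          omega
        · have hj1 : (e i).2.1 ∈ coords (e j) := by rw [hw]; exact hself2 j
          have := hrk_mono (e i).2.1 j i h hjE hj1
          omega
      · simp at hq
    · rcases hsec_mem j _ hpj with ⟨hjE, hq⟩ | ⟨hjE, h1', hq⟩ | ⟨hjE, h2', hq⟩ | ⟨k', hq⟩
      · simp at hq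
      · simp at hq
      · simp at hq
      · simp only [Sum.inr.injEq, Prod.mk.injEq] at hq
        exact hij hq.1
  -- global list
  set sec' : ℕ → List (DMPlayer X Y Z e × ℝ × ℝ) :=
    fun n => if h : n < M then secL X Y Z e heX heY heZ E' (rnk e E') ⟨n, h⟩ else []
    with hsec'
  set L : List (DMPlayer X Y Z e × ℝ × ℝ) := (List.range M).flatMap sec' with hLdef
  have hsec'eq : ∀ (n : ℕ) (h : n < M), sec' n = secL X Y Z e heX heY heZ E' (rnk e E') ⟨n, h⟩ := by
    intro n h; simp only [hsec']; rw [dif_pos h]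
  -- entry facts
  have hMne : (M:ℝ) ≠ 0 := ne_of_gt hM0
  have hMinv1 : (M:ℝ≥0∞)⁻¹ = ENNReal.ofReal (1 / (M:ℝ)) := by
    rw [one_div, ENNReal.ofReal_inv_of_pos hM0, ENNReal.ofReal_natCast]
  have hMinv2 : (M:ℝ≥0∞)⁻¹
      = ENNReal.ofReal (1 / (2 * (M:ℝ))) + ENNReal.ofReal (1 / (2 * (M:ℝ))) := by
    rw [← ENNReal.ofReal_add (by positivity) (by positivity), hMinv1]
    congr 1
    field_simp
    ring
  have hMinv_le1 : (M:ℝ≥0∞)⁻¹ ≤ 1 := ENNReal.inv_le_one.mpr (by exact_mod_cast hM)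
  have hsec_ent : ∀ (i : Fin M), ∀ ent ∈ secL X Y Z e heX heY heZ E' (rnk e E') i,
      ent.2.1 ≤ ent.2.2 ∧ (M:ℝ≥0∞)⁻¹ ≤ dmMeas X Y Z e ent.1 (Ioo ent.2.1 ent.2.2) := by
    intro i ent hent
    by_cases hi : i ∈ E'
    · rw [hsecM i hi] at hent
      simp only [List.mem_cons, List.not_mem_nil, or_false] at hent
      rcases hent with rfl | rfl | rfl | rfl
      · -- triplet player
        refine ⟨by norm_num, ?_⟩
        rw [hMinv2]
        simp only [dmMeas, dmDensity]
        refine DM3Aux.le_meas_of_two_unif (a₁ := 2 * (i : ℝ)) (b₁ := 2 * (i : ℝ) + 1 / 4)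
          (a₂ := 2 * (i : ℝ) + 3 / 4) (b₂ := 2 * (i : ℝ) + 1)
          le_rfl (by linarith) (by linarith) (by linarith) (by linarith) le_rfl (by positivity) ?_
        intro t
        refine le_trans ?_ (le_trans (Finset.single_le_sum
          (f := fun i' : Fin M => if (e i).2.2 ∈ coords (e i') then
            unif (2 * (i' : ℝ)) (2 * (i' : ℝ) + 1 / 4) (1 / (2 * (M : ℝ))) t +
              unif (2 * (i' : ℝ) + 3 / 4) (2 * (i' : ℝ) + 1) (1 / (2 * (M : ℝ))) t
          else 0) (fun _ _ => zero_le) (Finset.mem_univ i)) le_self_add)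
        beta_reduce
        rw [if_pos (hself3 i)]
      · refine ⟨by norm_num, ?_⟩
        refine le_trans hMinv_le1 ?_
        rw [← ENNReal.ofReal_one]
        simp only [dmMeas]
        refine DM3Aux.le_meas_of_unif (a' := 2 * (i : ℝ) + 1) (b' := 2 * (i : ℝ) + 6 / 5)
          le_rfl (by linarith) le_rfl zero_le_one ?_
        intro t
        simp [dmDensity]
      · refine ⟨by norm_num, ?_⟩
        refine le_trans hMinv_le1 ?_
        rw [← ENNReal.ofReal_one]
        simp only [dmMeas]
        refine DM3Aux.le_meas_of_unif (a' := 2 * (i : ℝ) + 7 / 5) (b' := 2 * (i : ℝ) + 8 / 5)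
          (by linarith) (by linarith) le_rfl zero_le_one ?_
        intro t
        simp [dmDensity]
      · refine ⟨by norm_num, ?_⟩
        refine le_trans hMinv_le1 ?_
        rw [← ENNReal.ofReal_one]
        simp only [dmMeas]
        refine DM3Aux.le_meas_of_unif (a' := 2 * (i : ℝ) + 9 / 5) (b' := 2 * (i : ℝ) + 2)
          (by linarith) (by linarith) le_rfl zero_le_one ?_
        intro t
        simp [dmDensity]
    · rw [hsecU i hi] at hent
      simp only [List.mem_cons, List.not_mem_nil, or_false] at hent
      rcases hent with rfl | rfl | rfl | rfl | rfl
      · -- x ground player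
        refine ⟨by norm_num, ?_⟩
        rw [hMinv1]
        simp only [dmMeas, dmDensity]
        refine DM3Aux.le_meas_of_unif (a' := 2 * (i : ℝ) + 1 / 4) (b' := 2 * (i : ℝ) + 1 / 2)
          (by linarith) (by linarith) (by linarith) (by positivity) ?_
        intro t
        refine le_trans ?_ (le_trans (Finset.single_le_sum
          (f := fun i' : Fin M => if (e i).1 ∈ coords (e i') then
            unif (2 * (i' : ℝ) + 1 / 4) (2 * (i' : ℝ) + 1 / 2) (1 / (M : ℝ)) t
          else 0) (fun _ _ => zero_le) (Finset.mem_univ i)) le_self_add)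
        beta_reduce
        rw [if_pos (hself1 i)]
      · -- y ground player
        refine ⟨by norm_num, ?_⟩
        rw [hMinv1]
        simp only [dmMeas, dmDensity]
        refine DM3Aux.le_meas_of_unif (a' := 2 * (i : ℝ) + 1 / 2) (b' := 2 * (i : ℝ) + 3 / 4)
          le_rfl (by linarith) (by linarith) (by positivity) ?_
        intro t
        refine le_trans ?_ (le_trans (Finset.single_le_sum
          (f := fun i' : Fin M => if (e i).2.1 ∈ coords (e i') then
            unif (2 * (i' : ℝ) + 1 / 2) (2 * (i' : ℝ) + 3 / 4) (1 / (M : ℝ)) t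
          else 0) (fun _ _ => zero_le) (Finset.mem_univ i)) le_self_add)
        beta_reduce
        rw [if_pos (hself2 i)]
      · refine ⟨by norm_num, ?_⟩
        refine le_trans hMinv_le1 ?_
        rw [← ENNReal.ofReal_one]
        simp only [dmMeas]
        refine DM3Aux.le_meas_of_unif (a' := 2 * (i : ℝ) + 1) (b' := 2 * (i : ℝ) + 6 / 5)
          le_rfl (by linarith) le_rfl zero_le_one ?_
        intro t
        simp [dmDensity]
      · refine ⟨by norm_num, ?_⟩
        refine le_trans hMinv_le1 ?_
        rw [← ENNReal.ofReal_one]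
        simp only [dmMeas]
        refine DM3Aux.le_meas_of_unif (a' := 2 * (i : ℝ) + 7 / 5) (b' := 2 * (i : ℝ) + 8 / 5)
          (by linarith) (by linarith) le_rfl zero_le_one ?_
        intro t
        simp [dmDensity]
      · refine ⟨by norm_num, ?_⟩
        refine le_trans hMinv_le1 ?_
        rw [← ENNReal.ofReal_one]
        simp only [dmMeas]
        refine DM3Aux.le_meas_of_unif (a' := 2 * (i : ℝ) + 9 / 5) (b' := 2 * (i : ℝ) + 2)
          (by linarith) (by linarith) le_rfl zero_le_one ?_
        intro t
        simp [dmDensity]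
  have hentL : ∀ ent ∈ L,
      ent.2.1 ≤ ent.2.2 ∧ (M:ℝ≥0∞)⁻¹ ≤ dmMeas X Y Z e ent.1 (Ioo ent.2.1 ent.2.2) := by
    intro ent hent'
    rw [hLdef, List.mem_flatMap] at hent'
    obtain ⟨n, hn, hsec⟩ := hent'
    have hnM := List.mem_range.mp hn
    rw [hsec'eq n hnM] at hsec
    exact hsec_ent ⟨n, hnM⟩ ent hsec
  -- length
  have hEcard_le : n' ≤ M := by
    have h := Finset.card_le_univ E'
    rw [hEc] at h; simpa using h
  have hsum : ∀ (W : Finset α) (f : Fin M → α), (∀ i, f i ∈ W) →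
      (∀ w ∈ W, ∀ i : Fin M, w ∈ coords (e i) ↔ f i = w) → ∑ w ∈ W, mult e w = M := by
    intro W f hf hchar
    have h1 : ∀ w ∈ W, mult e w = ∑ i : Fin M, if w ∈ coords (e i) then 1 else 0 :=
      fun w _ => Finset.card_filter _ _
    rw [Finset.sum_congr rfl h1, Finset.sum_comm]
    have h2 : ∀ i : Fin M, ∑ w ∈ W, (if w ∈ coords (e i) then 1 else 0) = 1 := by
      intro i
      rw [← Finset.card_filter]
      have h3 : W.filter (fun w => w ∈ coords (e i)) = {f i} := by
        ext w
        simp only [Finset.mem_filter, Finset.mem_singleton]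
        constructor
        · rintro ⟨hw, hc⟩; exact ((hchar w hw i).mp hc).symm
        · rintro rfl; exact ⟨hf i, (hchar (f i) (hf i) i).mpr rfl⟩
      rw [h3, Finset.card_singleton]
    rw [Finset.sum_congr rfl (fun i _ => h2 i)]
    simp
  have hsumX : ∑ w ∈ X, mult e w = M := hsum X (fun i => (e i).1) heX (fun w hw i => hcoX w hw i)
  have hsumY : ∑ w ∈ Y, mult e w = M := hsum Y (fun i => (e i).2.1) heY (fun w hw i => hcoY w hw i)
  have hsubX : ∑ w ∈ X, (mult e w - 1) + n' = M := by
    have h1 : ∑ w ∈ X, (mult e w - 1 + 1) = ∑ w ∈ X, mult e w :=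
      Finset.sum_congr rfl (fun w hw => by
        have := hmult w (Finset.mem_union_left _ (Finset.mem_union_left _ hw)); omega)
    rw [Finset.sum_add_distrib, ← Finset.card_eq_sum_ones, hX, hsumX] at h1
    exact h1
  have hsubY : ∑ w ∈ Y, (mult e w - 1) + n' = M := by
    have h1 : ∑ w ∈ Y, (mult e w - 1 + 1) = ∑ w ∈ Y, mult e w :=
      Finset.sum_congr rfl (fun w hw => by
        have := hmult w (Finset.mem_union_left _ (Finset.mem_union_right _ hw)); omega)
    rw [Finset.sum_add_distrib, ← Finset.card_eq_sum_ones, hY, hsumY] at h1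
    exact h1
  have hcardP : Fintype.card (DMPlayer X Y Z e) = n' + ((M - n') + ((M - n') + M * 3)) := by
    have hx : ∑ w ∈ X, (mult e w - 1) = M - n' := by omega
    have hy : ∑ w ∈ Y, (mult e w - 1) = M - n' := by omega
    simp only [DMPlayer, Fintype.card_sum, Fintype.card_sigma, Fintype.card_prod,
      Fintype.card_fin, Fintype.card_coe]
    rw [Finset.sum_coe_sort X (fun x => mult e x - 1), Finset.sum_coe_sort Y (fun y => mult e y - 1),
      hZ, hx, hy]
  have hLlen4 : L.length = 4 * n' + 5 * (M - n') := by
    rw [hLdef, List.length_flatMap]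
    have hrfl : ((List.range M).map (List.length ∘ sec')).sum
        = ∑ n ∈ Finset.range M, (List.length ∘ sec') n := rfl
    rw [show ((List.range M).map (fun a => (sec' a).length)).sum
        = ((List.range M).map (List.length ∘ sec')).sum from rfl, hrfl]
    have hcongr : ∀ n ∈ Finset.range M,
        (List.length ∘ sec') n = if n ∈ E'.image Fin.val then 4 else 5 := by
      intro n hn
      have hnM : n < M := Finset.mem_range.mp hn
      have hmemiff : (⟨n, hnM⟩ : Fin M) ∈ E' ↔ n ∈ E'.image Fin.val := by
        constructor
        · intro h; exact Finset.mem_image.mpr ⟨⟨n, hnM⟩, h, rfl⟩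
        · intro h
          obtain ⟨j, hj, hjv⟩ := Finset.mem_image.mp h
          rwa [show j = (⟨n, hnM⟩ : Fin M) from Fin.ext hjv] at hj
      show (sec' n).length = _
      rw [hsec'eq n hnM, hsec_len ⟨n, hnM⟩]
      by_cases h : (⟨n, hnM⟩ : Fin M) ∈ E'
      · rw [if_pos h, if_pos (hmemiff.mp h)]
      · rw [if_neg h, if_neg (fun hc => h (hmemiff.mpr hc))]
    rw [Finset.sum_congr rfl hcongr, Finset.sum_ite]
    have hE''sub : E'.image Fin.val ⊆ Finset.range M := by
      intro n hn
      obtain ⟨j, _, rfl⟩ := Finset.mem_image.mp hn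
      exact Finset.mem_range.mpr j.isLt
    have hfilter1 : (Finset.range M).filter (fun n => n ∈ E'.image Fin.val) = E'.image Fin.val := by
      rw [Finset.filter_mem_eq_inter]
      exact Finset.inter_eq_right.mpr hE''sub
    have hcardE'' : (E'.image Fin.val).card = n' := by
      rw [Finset.card_image_of_injective _ Fin.val_injective, hEc]
    rw [Finset.sum_const, Finset.sum_const, Finset.filter_not, hfilter1,
      Finset.card_sdiff_of_subset hE''sub, Finset.card_range, hcardE'', smul_eq_mul, smul_eq_mul]
    omega
  have hLlen : L.length = Fintype.card (DMPlayer X Y Z e) := by omega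
  -- IPL
  have hipl : DM3Aux.IPL L 0 (2 * (M : ℝ)) := by
    have key : ∀ m : ℕ, m ≤ M → DM3Aux.IPL ((List.range m).flatMap sec') 0 (2 * (m : ℝ)) := by
      intro m
      induction m with
      | zero => intro _; simp [DM3Aux.IPL]
      | succ m ih =>
        intro hm
        rw [List.range_succ, List.flatMap_append]
        have hmM : m < M := hm
        have h2 : DM3Aux.IPL (sec' m) (2 * (m : ℝ)) (2 * (m : ℝ) + 2) := by
          rw [hsec'eq m hmM]
          exact hsec_ipl ⟨m, hmM⟩
        have h3 : DM3Aux.IPL ([m].flatMap sec') (2 * (m : ℝ)) (2 * (m : ℝ) + 2) := by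
          simpa using h2
        have h4 := DM3Aux.ipl_append (ih (Nat.le_of_succ_le hm)) h3
        have hcast : (2:ℝ) * ((m + 1 : ℕ) : ℝ) = 2 * (m : ℝ) + 2 := by push_cast; ring
        rw [hcast]
        exact h4
    exact key M le_rfl
  -- nodup
  have hnd : (L.map Prod.fst).Nodup := by
    rw [hLdef, List.map_flatMap, List.nodup_flatMap]
    constructor
    · intro n hn
      have hnM : n < M := List.mem_range.mp hn
      rw [hsec'eq n hnM]
      exact hsec_nodup ⟨n, hnM⟩
    · refine (List.nodup_range : (List.range M).Nodup).pairwise_of_forall_ne ?_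
      intro m hm n hn hmn
      have hmM : m < M := List.mem_range.mp hm
      have hnM : n < M := List.mem_range.mp hn
      show List.Disjoint (List.map Prod.fst (sec' m)) (List.map Prod.fst (sec' n))
      rw [hsec'eq m hmM, hsec'eq n hnM]
      exact hdisj ⟨m, hmM⟩ ⟨n, hnM⟩ (fun h => hmn (congrArg Fin.val h))
  -- all players occur
  have hall : ∀ p : DMPlayer X Y Z e, p ∈ L.map Prod.fst := by
    have hcard : (L.map Prod.fst).toFinset.card = Fintype.card (DMPlayer X Y Z e) := by
      rw [List.toFinset_card_of_nodup hnd, List.length_map, hLlen]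
    have huniv := Finset.eq_univ_of_card _ hcard
    intro p
    rw [← List.mem_toFinset, huniv]
    exact Finset.mem_univ p
  have hlenmap : Fintype.card (DMPlayer X Y Z e) = (L.map Prod.fst).length := by
    rw [List.length_map, hLlen]
  refine ⟨fun j => if h : (j : ℕ) < L.length then (L.get ⟨(j : ℕ), h⟩).2.1 else 2 * (M : ℝ),
    (finCongr hlenmap).trans (List.Nodup.getEquivOfForallMemList (L.map Prod.fst) hnd hall),
    ?_, ?_, ?_, ?_⟩
  · -- Monotone
    have hcf : Monotone (fun n : ℕ =>
        if h : n < L.length then (L.get ⟨n, h⟩).2.1 else 2 * (M : ℝ)) := by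
      apply monotone_nat_of_le_succ
      intro n
      by_cases h : n < L.length
      · simp only [dif_pos h]
        have hr := DM3Aux.ipl_get hipl n h
        calc (L.get ⟨n, h⟩).2.1 ≤ (L.get ⟨n, h⟩).2.2 := (hentL _ (List.get_mem L ⟨n, h⟩)).1
          _ = _ := hr
      · rw [dif_neg h, dif_neg (by omega)]
    intro a b hab
    exact hcf hab
  · -- c 0 = 0
    have h0 : 0 < L.length := by omega
    show (if h : ((0 : Fin (Fintype.card (DMPlayer X Y Z e) + 1)) : ℕ) < L.length
        then (L.get ⟨_, h⟩).2.1 else 2 * (M : ℝ)) = 0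
    rw [dif_pos (show ((0 : Fin (Fintype.card (DMPlayer X Y Z e) + 1)) : ℕ) < L.length from h0)]
    exact DM3Aux.ipl_zero hipl h0
  · -- c last = 2M
    show (if h : ((Fin.last (Fintype.card (DMPlayer X Y Z e))) : ℕ) < L.length
        then (L.get ⟨_, h⟩).2.1 else 2 * (M : ℝ)) = 2 * (M : ℝ)
    have hnlt : ¬ (((Fin.last (Fintype.card (DMPlayer X Y Z e))) : ℕ) < L.length) := by
      rw [Fin.val_last, hLlen]
      exact lt_irrefl _
    rw [dif_neg hnlt]
  · -- main inequality
    intro p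
    set k := ((finCongr hlenmap).trans
      (List.Nodup.getEquivOfForallMemList (L.map Prod.fst) hnd hall)).symm p with hkdef
    have hkL : (k : ℕ) < L.length := by
      rw [hLlen]; exact k.isLt
    have hpk : p = (L.get ⟨(k : ℕ), hkL⟩).1 := by
      have h1 := Equiv.apply_symm_apply
        ((finCongr hlenmap).trans (List.Nodup.getEquivOfForallMemList (L.map Prod.fst) hnd hall)) p
      rw [← hkdef] at h1
      rw [← h1]
      simp only [Equiv.trans_apply, finCongr_apply, List.Nodup.getEquivOfForallMemList_apply]
      simp [List.get_eq_getElem, List.getElem_map]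
    have hc1 : (if h : ((k.castSucc : Fin (Fintype.card (DMPlayer X Y Z e) + 1)) : ℕ) < L.length
        then (L.get ⟨_, h⟩).2.1 else 2 * (M : ℝ)) = (L.get ⟨(k : ℕ), hkL⟩).2.1 := by
      rw [dif_pos (show ((k.castSucc : Fin _) : ℕ) < L.length from hkL)]
      rfl
    have hc2 : (if h : ((k.succ : Fin (Fintype.card (DMPlayer X Y Z e) + 1)) : ℕ) < L.length
        then (L.get ⟨_, h⟩).2.1 else 2 * (M : ℝ)) = (L.get ⟨(k : ℕ), hkL⟩).2.2 :=
      (DM3Aux.ipl_get hipl (k : ℕ) hkL).symm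
    beta_reduce
    rw [hc1, hc2, hpk]
    exact (hentL _ (List.get_mem L ⟨(k : ℕ), hkL⟩)).2
end

section
/- In the cake instance constructed from a 3-Dimensional Matching instance (X, Y, Z, E): if there is no E' ⊆ E with |E'| = n' such that every element of X ∪ Y ∪ Z is a coordinate of some triple in E', then in every connected division some player's utility is at most 1/(2M). (Soundness direction of the reduction proving that maximizing egalitarian welfare with connected pieces is NP-hard and hard to approximate within any factor smaller than 2.) -/
open MeasureTheory Set
open scoped ENNReal

section Stmt2Helpers

open MeasureTheory Set
open scoped ENNReal

lemma measurable_unif (a b c : ℝ) : Measurable (unif a b c) :=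
  Measurable.indicator measurable_const measurableSet_Ioo

lemma lint_unif (a b c : ℝ) (S : Set ℝ) :
    ∫⁻ t in S, unif a b c t = ENNReal.ofReal (c / (b - a)) * volume (S ∩ Ioo a b) := by
  rw [unif, lintegral_indicator measurableSet_Ioo, setLIntegral_const,
    Measure.restrict_apply measurableSet_Ioo, inter_comm]

lemma lint_unif' (a b c d : ℝ) (S : Set ℝ) (hd : b - a = d) :
    ∫⁻ t in S, unif a b c t = ENNReal.ofReal (c / d) * volume (S ∩ Ioo a b) := by
  rw [lint_unif, hd]

lemma measurable_compDensity (M mw : ℕ) : Measurable (compDensity M mw) := by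
  apply Finset.measurable_sum
  exact fun j _ => (measurable_unif _ _ _).add (measurable_unif _ _ _)

lemma lint_comp (M mw : ℕ) (S : Set ℝ) :
    ∫⁻ t in S, compDensity M mw t =
      ∑ j : Fin M,
        ENNReal.ofReal ((((M:ℝ) - mw) / (2*(M:ℝ)^2)) / (1/5)) *
          (volume (S ∩ Ioo (2*(j:ℝ)+6/5) (2*(j:ℝ)+7/5)) +
           volume (S ∩ Ioo (2*(j:ℝ)+8/5) (2*(j:ℝ)+9/5))) := by
  unfold compDensity
  rw [lintegral_finset_sum _ (fun j _ => ?_)]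
  refine Finset.sum_congr rfl fun j _ => ?_
  rw [lintegral_add_left (measurable_unif _ _ _),
    lint_unif' _ _ _ (1/5) _ (by ring), lint_unif' _ _ _ (1/5) _ (by ring), mul_add]
  exact (measurable_unif _ _ _).add (measurable_unif _ _ _)

variable {α : Type*} [DecidableEq α] (X Y Z : Finset α) {M : ℕ} (e : Fin M → α × α × α)

lemma meas_triplet (z : {z // z ∈ Z}) {S : Set ℝ} (hS : MeasurableSet S) :
    dmMeas X Y Z e (Sum.inl z) S =
      (∑ i : Fin M, if z.1 ∈ coords (e i) then
          ENNReal.ofReal (1/(2*(M:ℝ)) / (1/4)) *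
            (volume (S ∩ Ioo (2*(i:ℝ)) (2*(i:ℝ)+1/4)) +
             volume (S ∩ Ioo (2*(i:ℝ)+3/4) (2*(i:ℝ)+1))) else 0)
      + ∑ j : Fin M,
          ENNReal.ofReal ((((M:ℝ) - mult e z.1) / (2*(M:ℝ)^2)) / (1/5)) *
            (volume (S ∩ Ioo (2*(j:ℝ)+6/5) (2*(j:ℝ)+7/5)) +
             volume (S ∩ Ioo (2*(j:ℝ)+8/5) (2*(j:ℝ)+9/5))) := by
  rw [dmMeas, withDensity_apply _ hS]
  show ∫⁻ t in S, ((∑ i : Fin M, _) + compDensity M (mult e z.1) t) = _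
  rw [lintegral_add_right _ (measurable_compDensity _ _), lint_comp]
  congr 1
  rw [lintegral_finset_sum _ (fun i _ => ?_)]
  · refine Finset.sum_congr rfl fun i _ => ?_
    by_cases h : z.1 ∈ coords (e i)
    · simp only [h, if_true]
      rw [lintegral_add_left (measurable_unif _ _ _),
        lint_unif' _ _ _ (1/4) _ (by ring), lint_unif' _ _ _ (1/4) _ (by ring), mul_add]
    · simp [h]
  · by_cases h : z.1 ∈ coords (e i)
    · simp only [h, if_true]; exact (measurable_unif _ _ _).add (measurable_unif _ _ _)
    · simp only [h, if_false]; exact measurable_const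

lemma meas_groundX (x : {x // x ∈ X}) (a : Fin (mult e x.1 - 1)) {S : Set ℝ}
    (hS : MeasurableSet S) :
    dmMeas X Y Z e (Sum.inr (Sum.inl ⟨x, a⟩)) S =
      (∑ i : Fin M, if x.1 ∈ coords (e i) then
          ENNReal.ofReal (1/(M:ℝ) / (1/4)) *
            volume (S ∩ Ioo (2*(i:ℝ)+1/4) (2*(i:ℝ)+1/2)) else 0)
      + ∑ j : Fin M,
          ENNReal.ofReal ((((M:ℝ) - mult e x.1) / (2*(M:ℝ)^2)) / (1/5)) *
            (volume (S ∩ Ioo (2*(j:ℝ)+6/5) (2*(j:ℝ)+7/5)) +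
             volume (S ∩ Ioo (2*(j:ℝ)+8/5) (2*(j:ℝ)+9/5))) := by
  rw [dmMeas, withDensity_apply _ hS]
  show ∫⁻ t in S, ((∑ i : Fin M, _) + compDensity M (mult e x.1) t) = _
  rw [lintegral_add_right _ (measurable_compDensity _ _), lint_comp]
  congr 1
  rw [lintegral_finset_sum _ (fun i _ => ?_)]
  · refine Finset.sum_congr rfl fun i _ => ?_
    by_cases h : x.1 ∈ coords (e i)
    · simp only [h, if_true]
      rw [lint_unif' _ _ _ (1/4) _ (by ring)]
    · simp [h]
  · by_cases h : x.1 ∈ coords (e i)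
    · simp only [h, if_true]; exact measurable_unif _ _ _
    · simp only [h, if_false]; exact measurable_const

lemma meas_groundY (y : {y // y ∈ Y}) (a : Fin (mult e y.1 - 1)) {S : Set ℝ}
    (hS : MeasurableSet S) :
    dmMeas X Y Z e (Sum.inr (Sum.inr (Sum.inl ⟨y, a⟩))) S =
      (∑ i : Fin M, if y.1 ∈ coords (e i) then
          ENNReal.ofReal (1/(M:ℝ) / (1/4)) *
            volume (S ∩ Ioo (2*(i:ℝ)+1/2) (2*(i:ℝ)+3/4)) else 0)
      + ∑ j : Fin M,
          ENNReal.ofReal ((((M:ℝ) - mult e y.1) / (2*(M:ℝ)^2)) / (1/5)) *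
            (volume (S ∩ Ioo (2*(j:ℝ)+6/5) (2*(j:ℝ)+7/5)) +
             volume (S ∩ Ioo (2*(j:ℝ)+8/5) (2*(j:ℝ)+9/5))) := by
  rw [dmMeas, withDensity_apply _ hS]
  show ∫⁻ t in S, ((∑ i : Fin M, _) + compDensity M (mult e y.1) t) = _
  rw [lintegral_add_right _ (measurable_compDensity _ _), lint_comp]
  congr 1
  rw [lintegral_finset_sum _ (fun i _ => ?_)]
  · refine Finset.sum_congr rfl fun i _ => ?_
    by_cases h : y.1 ∈ coords (e i)
    · simp only [h, if_true]
      rw [lint_unif' _ _ _ (1/4) _ (by ring)]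
    · simp [h]
  · by_cases h : y.1 ∈ coords (e i)
    · simp only [h, if_true]; exact measurable_unif _ _ _
    · simp only [h, if_false]; exact measurable_const

lemma meas_sep (i : Fin M) (k : Fin 3) {S : Set ℝ} (hS : MeasurableSet S) :
    dmMeas X Y Z e (Sum.inr (Sum.inr (Sum.inr (i, k)))) S =
      if k = 0 then ENNReal.ofReal ((1:ℝ)/(1/5)) * volume (S ∩ Ioo (2*(i:ℝ)+1) (2*(i:ℝ)+6/5))
      else if k = 1 then ENNReal.ofReal ((1:ℝ)/(1/5)) * volume (S ∩ Ioo (2*(i:ℝ)+7/5) (2*(i:ℝ)+8/5))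
      else ENNReal.ofReal ((1:ℝ)/(1/5)) * volume (S ∩ Ioo (2*(i:ℝ)+9/5) (2*(i:ℝ)+2)) := by
  rw [dmMeas, withDensity_apply _ hS]
  by_cases h0 : k = 0
  · simp only [dmDensity, h0, if_true]
    exact lint_unif' _ _ _ (1/5) _ (by ring)
  by_cases h1 : k = 1
  · simp only [dmDensity, h0, h1, if_true, if_false]
    exact lint_unif' _ _ _ (1/5) _ (by ring)
  · simp only [dmDensity, h0, h1, if_false]
    exact lint_unif' _ _ _ (1/5) _ (by ring)

lemma Ioo_inter_empty {l r a b : ℝ} (h : r ≤ a ∨ b ≤ l) : Ioo l r ∩ Ioo a b = ∅ := by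
  rcases h with h | h <;>
  · refine eq_empty_iff_forall_notMem.2 fun t ht => ?_
    obtain ⟨⟨h1, h2⟩, h3, h4⟩ := ht
    linarith

lemma sub_inter_empty {P G s : Set ℝ} (hPG : P ⊆ G) (h : G ∩ s = ∅) : P ∩ s = ∅ :=
  eq_empty_of_subset_empty (h ▸ inter_subset_inter_left _ hPG)

lemma vol_inter_Ioo_le (S : Set ℝ) (a b : ℝ) :
    volume (S ∩ Ioo a b) ≤ ENNReal.ofReal (b - a) := by
  refine le_trans (measure_mono inter_subset_right) ?_
  rw [Real.volume_Ioo]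

lemma fin_real_cases {M : ℕ} (i j : Fin M) (h : i ≠ j) :
    ((i:ℕ):ℝ) + 1 ≤ ((j:ℕ):ℝ) ∨ ((j:ℕ):ℝ) + 1 ≤ ((i:ℕ):ℝ) := by
  rcases lt_or_gt_of_ne (fun hh : (i:ℕ) = (j:ℕ) => h (Fin.ext hh)) with hh | hh
  · left; exact_mod_cast hh
  · right; exact_mod_cast hh

end Stmt2Helpers

set_option maxHeartbeats 2000000 in
/-- soundness of the 3DM reduction, Theorem 2: if the 3DM
instance has no perfect matching `E' ⊆ E`, `|E'| = n'`, covering `X ∪ Y ∪ Z`,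
then in every connected division of the constructed cake instance some player's
utility is at most `1/(2M)`. -/
theorem stmt_2 {α : Type*} [DecidableEq α] (X Y Z : Finset α) (n' M : ℕ)
    (hM : 1 ≤ M) (hX : X.card = n') (hY : Y.card = n') (hZ : Z.card = n')
    (hXY : Disjoint X Y) (hXZ : Disjoint X Z) (hYZ : Disjoint Y Z)
    (e : Fin M → α × α × α) (he : Function.Injective e)
    (heX : ∀ i, (e i).1 ∈ X) (heY : ∀ i, (e i).2.1 ∈ Y) (heZ : ∀ i, (e i).2.2 ∈ Z)
    (hmult : ∀ w ∈ X ∪ Y ∪ Z, 1 ≤ mult e w)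
    (hnocover : ¬∃ E' : Finset (Fin M), E'.card = n' ∧
      ∀ w ∈ X ∪ Y ∪ Z, ∃ i ∈ E', w ∈ coords (e i)) :
    ∀ (c : Fin (Fintype.card (DMPlayer X Y Z e) + 1) → ℝ)
      (σ : Fin (Fintype.card (DMPlayer X Y Z e)) ≃ DMPlayer X Y Z e),
      Monotone c → c 0 = 0 → c (Fin.last _) = 2 * M →
      ∃ p : DMPlayer X Y Z e,
        dmMeas X Y Z e p (Ioo (c (σ.symm p).castSucc) (c (σ.symm p).succ)) ≤
          (2 * (M : ℝ≥0∞))⁻¹ := by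
  classical
  intro c σ hmono hc0 hclast
  by_contra hcon
  push_neg at hcon
  have hM0 : (0:ℝ) < M := by exact_mod_cast hM
  set lo : DMPlayer X Y Z e → ℝ := fun p => c (σ.symm p).castSucc with hlo
  set hi : DMPlayer X Y Z e → ℝ := fun p => c (σ.symm p).succ with hhi
  set P : DMPlayer X Y Z e → Set ℝ := fun p => Ioo (lo p) (hi p) with hPdef
  have hbd : (2 * (M : ℝ≥0∞))⁻¹ = ENNReal.ofReal (1/(2*(M:ℝ))) := by
    have h2M : (2*(M:ℝ≥0∞)) = ENNReal.ofReal (2*(M:ℝ)) := by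
      rw [ENNReal.ofReal_mul (by norm_num), ENNReal.ofReal_natCast]
      norm_num
    rw [h2M, ← ENNReal.ofReal_inv_of_pos (by positivity), one_div]
  have hcon' : ∀ p, ENNReal.ofReal (1/(2*(M:ℝ))) < dmMeas X Y Z e p (P p) :=
    fun p => hbd ▸ hcon p
  have horder : ∀ p q, σ.symm p < σ.symm q → hi p ≤ lo q := by
    intro p q hpq
    exact hmono (Fin.succ_le_castSucc_iff.2 hpq)
  have hdisj : ∀ p q, p ≠ q → ∀ t, t ∈ P p → t ∈ P q → False := by
    intro p q hne t ht hq
    have hne' : σ.symm p ≠ σ.symm q := fun h => hne (σ.symm.injective h)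
    rcases hne'.lt_or_gt with h | h
    · have := horder p q h
      simp only [hPdef, mem_Ioo] at ht hq
      linarith [ht.2, hq.1]
    · have := horder q p h
      simp only [hPdef, mem_Ioo] at ht hq
      linarith [ht.1, hq.2]
  have hnn : ∀ p, (0:ℝ) ≤ lo p := by
    intro p; rw [← hc0]; exact hmono (Fin.zero_le _)
  have hub : ∀ p, hi p ≤ 2*(M:ℝ) := by
    intro p; rw [← hclast]; exact hmono (Fin.le_last _)
  set sep : Fin M × Fin 3 → DMPlayer X Y Z e :=
    fun s => Sum.inr (Sum.inr (Sum.inr s)) with hsepdef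
  set sA : Fin M × Fin 3 → ℝ := fun s =>
    if s.2 = 0 then 2*(s.1:ℝ)+1 else if s.2 = 1 then 2*(s.1:ℝ)+7/5 else 2*(s.1:ℝ)+9/5 with hsA
  set sB : Fin M × Fin 3 → ℝ := fun s =>
    if s.2 = 0 then 2*(s.1:ℝ)+6/5 else if s.2 = 1 then 2*(s.1:ℝ)+8/5 else 2*(s.1:ℝ)+2 with hsB
  have hsepmeet : ∀ s, ∃ t, t ∈ P (sep s) ∩ Ioo (sA s) (sB s) := by
    rintro ⟨i, k⟩
    have h := hcon' (sep (i, k))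
    rw [show P (sep (i, k)) = Ioo (lo (sep (i, k))) (hi (sep (i, k))) from rfl,
      meas_sep X Y Z e i k measurableSet_Ioo] at h
    refine nonempty_of_measure_ne_zero (μ := volume) (fun h0 => ?_)
    simp only [hPdef] at h0
    by_cases hk0 : k = 0
    · rw [if_pos hk0] at h
      rw [show sA (i,k) = 2*(i:ℝ)+1 by simp [hsA, hk0],
        show sB (i,k) = 2*(i:ℝ)+6/5 by simp [hsB, hk0]] at h0
      rw [h0, mul_zero] at h; simp at h
    · by_cases hk1 : k = 1
      · rw [if_neg hk0, if_pos hk1] at h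
        rw [show sA (i,k) = 2*(i:ℝ)+7/5 by simp [hsA, hk0, hk1],
          show sB (i,k) = 2*(i:ℝ)+8/5 by simp [hsB, hk0, hk1]] at h0
        rw [h0, mul_zero] at h; simp at h
      · rw [if_neg hk0, if_neg hk1] at h
        rw [show sA (i,k) = 2*(i:ℝ)+9/5 by simp [hsA, hk0, hk1],
          show sB (i,k) = 2*(i:ℝ)+2 by simp [hsB, hk0, hk1]] at h0
        rw [h0, mul_zero] at h; simp at h
  have hseporder : ∀ s s', sB s ≤ sA s' → σ.symm (sep s) < σ.symm (sep s') := by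
    intro s s' hle
    obtain ⟨t, ht, htI⟩ := hsepmeet s
    obtain ⟨t', ht', htI'⟩ := hsepmeet s'
    rcases lt_trichotomy (σ.symm (sep s)) (σ.symm (sep s')) with h | h | h
    · exact h
    · exfalso
      have hss : s = s' := by
        have h2 := σ.symm.injective h
        simpa [hsepdef, Sum.inr.injEq] using h2
      subst hss
      simp only [mem_Ioo] at htI
      linarith [htI.1, htI.2]
    · exfalso
      have hord := horder (sep s') (sep s) h
      simp only [hPdef, mem_Ioo] at ht ht'
      simp only [mem_Ioo] at htI htI'
      linarith [ht.2, ht'.1, htI.2, htI'.1]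
  have hmle : ∀ w, mult e w ≤ M := by
    intro w
    exact le_trans (Finset.card_filter_le _ _) (by simp)
  have hcompslot : ∀ p, (∀ s, p ≠ sep s) → ∀ (A B : ℝ) (j0 : Fin M),
      (∀ i : Fin M, Ioo A B ∩ Ioo (2*(i:ℝ)) (2*(i:ℝ)+1) = ∅) →
      (∀ j : Fin M, j ≠ j0 →
        Ioo A B ∩ Ioo (2*(j:ℝ)+6/5) (2*(j:ℝ)+7/5) = ∅ ∧
        Ioo A B ∩ Ioo (2*(j:ℝ)+8/5) (2*(j:ℝ)+9/5) = ∅) →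
      (Ioo A B ∩ Ioo (2*(j0:ℝ)+6/5) (2*(j0:ℝ)+7/5) = ∅ ∨
        Ioo A B ∩ Ioo (2*(j0:ℝ)+8/5) (2*(j0:ℝ)+9/5) = ∅) →
      dmMeas X Y Z e p (Ioo A B) ≤ ENNReal.ofReal (1/(2*(M:ℝ))) := by
    intro p hp A B j0 hE hC hC0
    have hedge0 : ∀ (i : Fin M) (a b : ℝ), 2*(i:ℝ) ≤ a → b ≤ 2*(i:ℝ)+1 →
        volume (Ioo A B ∩ Ioo a b) = 0 := by
      intro i a b ha hb
      have hsub : Ioo A B ∩ Ioo a b ⊆ (∅ : Set ℝ) := by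
        rw [← hE i]; exact inter_subset_inter_right _ (Ioo_subset_Ioo ha hb)
      exact measure_mono_null hsub measure_empty
    have hkey : ∀ mw : ℕ, 1 ≤ mw → mw ≤ M →
        ∑ j : Fin M, ENNReal.ofReal ((((M:ℝ) - mw) / (2*(M:ℝ)^2)) / (1/5)) *
          (volume (Ioo A B ∩ Ioo (2*(j:ℝ)+6/5) (2*(j:ℝ)+7/5)) +
           volume (Ioo A B ∩ Ioo (2*(j:ℝ)+8/5) (2*(j:ℝ)+9/5))) ≤
        ENNReal.ofReal (1/(2*(M:ℝ))) := by
      intro mw hmw hmwM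
      have hmwR : (1:ℝ) ≤ (mw:ℝ) := by exact_mod_cast hmw
      have hmwMR : (mw:ℝ) ≤ (M:ℝ) := by exact_mod_cast hmwM
      have hqnn : (0:ℝ) ≤ (((M:ℝ) - mw) / (2*(M:ℝ)^2)) / (1/5) :=
        div_nonneg (div_nonneg (by linarith) (by positivity)) (by norm_num)
      have hfinal : ENNReal.ofReal (((((M:ℝ) - mw) / (2*(M:ℝ)^2)) / (1/5)) * (1/5)) ≤
          ENNReal.ofReal (1/(2*(M:ℝ))) := by
        apply ENNReal.ofReal_le_ofReal
        rw [div_mul_cancel₀ _ (by norm_num : (1:ℝ)/5 ≠ 0), div_le_div_iff₀ (by positivity) (by positivity)]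
        nlinarith
      rw [Finset.sum_eq_single j0]
      · rcases hC0 with h1 | h1
        · rw [h1, measure_empty, zero_add]
          refine le_trans (mul_le_mul_right (vol_inter_Ioo_le _ _ _) _) ?_
          rw [show (2*(j0:ℝ)+9/5) - (2*(j0:ℝ)+8/5) = 1/5 by ring,
            ← ENNReal.ofReal_mul hqnn]
          exact hfinal
        · rw [h1, measure_empty, add_zero]
          refine le_trans (mul_le_mul_right (vol_inter_Ioo_le _ _ _) _) ?_
          rw [show (2*(j0:ℝ)+7/5) - (2*(j0:ℝ)+6/5) = 1/5 by ring,
            ← ENNReal.ofReal_mul hqnn]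
          exact hfinal
      · intro j _ hj
        rw [(hC j hj).1, (hC j hj).2, measure_empty, add_zero, mul_zero]
      · intro h; exact absurd (Finset.mem_univ j0) h
    rcases p with z | p'
    · rw [meas_triplet X Y Z e z measurableSet_Ioo]
      have hz : z.1 ∈ X ∪ Y ∪ Z := Finset.mem_union_right _ z.2
      have hEdge : (∑ i : Fin M, if z.1 ∈ coords (e i) then
          ENNReal.ofReal (1/(2*(M:ℝ)) / (1/4)) *
            (volume (Ioo A B ∩ Ioo (2*(i:ℝ)) (2*(i:ℝ)+1/4)) +
             volume (Ioo A B ∩ Ioo (2*(i:ℝ)+3/4) (2*(i:ℝ)+1))) else 0) = 0 := by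
        refine Finset.sum_eq_zero fun i _ => ?_
        split_ifs
        · rw [hedge0 i _ _ (le_refl _) (by linarith), hedge0 i _ _ (by linarith) (le_refl _)]
          simp
        · rfl
      rw [hEdge, zero_add]
      exact hkey _ (hmult _ hz) (hmle _)
    rcases p' with ⟨x, a⟩ | p''
    · rw [meas_groundX X Y Z e x a measurableSet_Ioo]
      have hx : x.1 ∈ X ∪ Y ∪ Z := Finset.mem_union_left _ (Finset.mem_union_left _ x.2)
      have hEdge : (∑ i : Fin M, if x.1 ∈ coords (e i) then
          ENNReal.ofReal (1/(M:ℝ) / (1/4)) *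
            volume (Ioo A B ∩ Ioo (2*(i:ℝ)+1/4) (2*(i:ℝ)+1/2)) else 0) = 0 := by
        refine Finset.sum_eq_zero fun i _ => ?_
        split_ifs
        · rw [hedge0 i _ _ (by linarith) (by linarith)]
          simp
        · rfl
      rw [hEdge, zero_add]
      exact hkey _ (hmult _ hx) (hmle _)
    rcases p'' with ⟨y, a⟩ | s
    · rw [meas_groundY X Y Z e y a measurableSet_Ioo]
      have hy : y.1 ∈ X ∪ Y ∪ Z := Finset.mem_union_left _ (Finset.mem_union_right _ y.2)
      have hEdge : (∑ i : Fin M, if y.1 ∈ coords (e i) then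
          ENNReal.ofReal (1/(M:ℝ) / (1/4)) *
            volume (Ioo A B ∩ Ioo (2*(i:ℝ)+1/2) (2*(i:ℝ)+3/4)) else 0) = 0 := by
        refine Finset.sum_eq_zero fun i _ => ?_
        split_ifs
        · rw [hedge0 i _ _ (by linarith) (by linarith)]
          simp
        · rfl
      rw [hEdge, zero_add]
      exact hkey _ (hmult _ hy) (hmle _)
    · exact absurd rfl (hp s)
  have hlow : ∀ p s, σ.symm (sep s) < σ.symm p → sA s < lo p := by
    intro p s hs
    obtain ⟨t, ht, htI⟩ := hsepmeet s
    have hord := horder (sep s) p hs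
    simp only [hPdef, mem_Ioo] at ht
    simp only [mem_Ioo] at htI
    linarith [ht.2, htI.1]
  have hup : ∀ p s, σ.symm p < σ.symm (sep s) → hi p < sB s := by
    intro p s hs
    obtain ⟨t, ht, htI⟩ := hsepmeet s
    have hord := horder p (sep s) hs
    simp only [hPdef, mem_Ioo] at ht
    simp only [mem_Ioo] at htI
    linarith [ht.1, htI.2]
  have hblock : ∀ p, (∀ s, p ≠ sep s) →
      ∃ j : Fin M, P p ⊆ Ioo (2*(j:ℝ) - 1/5) (2*(j:ℝ) + 6/5) := by
    intro p hp
    have hne_pos : ∀ s, σ.symm p ≠ σ.symm (sep s) := fun s h => hp s (σ.symm.injective h)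
    set Bel : Finset (Fin M × Fin 3) :=
      Finset.univ.filter (fun s => σ.symm (sep s) < σ.symm p) with hBel
    by_cases hBe : Bel.Nonempty
    · obtain ⟨s, hsmem, hsmax⟩ := Finset.exists_max_image Bel (fun s => σ.symm (sep s)) hBe
      obtain ⟨i, k⟩ := s
      have hsmem' : σ.symm (sep (i,k)) < σ.symm p := (Finset.mem_filter.1 hsmem).2
      have habove : ∀ s', sB (i,k) ≤ sA s' → σ.symm p < σ.symm (sep s') := by
        intro s' hle
        rcases (hne_pos s').lt_or_gt with h | h
        · exact h
        · exfalso
          have hmem2 : s' ∈ Bel := Finset.mem_filter.2 ⟨Finset.mem_univ _, h⟩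
          exact absurd (hseporder (i,k) s' hle) (not_lt.2 (hsmax s' hmem2))
      have hcontr : ∀ (A B : ℝ) (j0 : Fin M), P p ⊆ Ioo A B →
          (∀ i : Fin M, Ioo A B ∩ Ioo (2*(i:ℝ)) (2*(i:ℝ)+1) = ∅) →
          (∀ j : Fin M, j ≠ j0 →
            Ioo A B ∩ Ioo (2*(j:ℝ)+6/5) (2*(j:ℝ)+7/5) = ∅ ∧
            Ioo A B ∩ Ioo (2*(j:ℝ)+8/5) (2*(j:ℝ)+9/5) = ∅) →
          (Ioo A B ∩ Ioo (2*(j0:ℝ)+6/5) (2*(j0:ℝ)+7/5) = ∅ ∨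
            Ioo A B ∩ Ioo (2*(j0:ℝ)+8/5) (2*(j0:ℝ)+9/5) = ∅) → False := by
        intro A B j0 hsub h1 h2 h3
        exact absurd (le_trans (measure_mono hsub) (hcompslot p hp A B j0 h1 h2 h3))
          (not_le.2 (hcon' p))
      by_cases hk0 : k = 0
      · exfalso
        subst hk0
        have hA : 2*(i:ℝ)+1 < lo p := by
          have := hlow p (i,0) hsmem'
          simpa [hsA] using this
        have hB : hi p < 2*(i:ℝ)+8/5 := by
          have := hup p (i,1) (habove (i,1) (by simp [hsA, hsB]; norm_num))
          simpa [hsB] using this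
        refine hcontr (2*(i:ℝ)+1) (2*(i:ℝ)+8/5) i (Ioo_subset_Ioo hA.le hB.le) ?_ ?_ ?_
        · intro i'
          apply Ioo_inter_empty
          rcases eq_or_ne i' i with rfl | hne
          · right; linarith
          · rcases fin_real_cases i' i hne with h | h
            · right; linarith
            · left; linarith
        · intro j hj
          rcases fin_real_cases j i hj with h | h
          · exact ⟨Ioo_inter_empty (Or.inr (by linarith)),
              Ioo_inter_empty (Or.inr (by linarith))⟩
          · exact ⟨Ioo_inter_empty (Or.inl (by linarith)),
              Ioo_inter_empty (Or.inl (by linarith))⟩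
        · right; exact Ioo_inter_empty (Or.inl (by linarith))
      by_cases hk1 : k = 1
      · exfalso
        subst hk1
        have hA : 2*(i:ℝ)+7/5 < lo p := by
          have := hlow p (i,1) hsmem'
          simpa [hsA] using this
        have hB : hi p < 2*(i:ℝ)+2 := by
          have := hup p (i,2) (habove (i,2) (by simp [hsA, hsB]; norm_num))
          simpa [hsB] using this
        refine hcontr (2*(i:ℝ)+7/5) (2*(i:ℝ)+2) i (Ioo_subset_Ioo hA.le hB.le) ?_ ?_ ?_
        · intro i'
          apply Ioo_inter_empty
          rcases eq_or_ne i' i with rfl | hne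
          · right; linarith
          · rcases fin_real_cases i' i hne with h | h
            · right; linarith
            · left; linarith
        · intro j hj
          rcases fin_real_cases j i hj with h | h
          · exact ⟨Ioo_inter_empty (Or.inr (by linarith)),
              Ioo_inter_empty (Or.inr (by linarith))⟩
          · exact ⟨Ioo_inter_empty (Or.inl (by linarith)),
              Ioo_inter_empty (Or.inl (by linarith))⟩
        · left; exact Ioo_inter_empty (Or.inr (by linarith))
      · -- k = 2
        have hk2 : k = 2 := by omega
        subst hk2
        have hA : 2*(i:ℝ)+9/5 < lo p := by
          have := hlow p (i,2) hsmem'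
          simpa [hsA] using this
        by_cases hiM : (i:ℕ) + 1 < M
        · refine ⟨⟨(i:ℕ)+1, hiM⟩, ?_⟩
          have hB : hi p < 2*((i:ℕ):ℝ)+2+6/5 := by
            have := hup p (⟨(i:ℕ)+1, hiM⟩, 0)
              (habove (⟨(i:ℕ)+1, hiM⟩, 0) (by simp [hsA, hsB]; push_cast; linarith))
            simp only [hsB, if_pos rfl] at this
            push_cast at this
            linarith
          intro t ht
          simp only [hPdef, mem_Ioo] at ht
          simp only [mem_Ioo]
          push_cast
          constructor
          · linarith [ht.1]
          · linarith [ht.2]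
        · exfalso
          have hieq : ((i:ℕ):ℝ) + 1 = (M:ℝ) := by
            have h1 : (i:ℕ) < M := i.2
            have : (i:ℕ) + 1 = M := by omega
            exact_mod_cast this
          have hsub : P p ⊆ Ioo (2*(i:ℝ)+9/5) (2*(i:ℝ)+9/5+1) := by
            intro t ht
            simp only [hPdef, mem_Ioo] at ht
            have h2 := hub p
            simp only [mem_Ioo]
            constructor
            · linarith [ht.1]
            · have : hi p ≤ 2*(i:ℝ)+2 := by rw [← hieq] at h2; linarith
              linarith [ht.2]
          refine hcontr _ _ i hsub ?_ ?_ ?_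
          · intro i'
            apply Ioo_inter_empty
            right
            have h3 : ((i':ℕ):ℝ) + 1 ≤ (M:ℝ) := by exact_mod_cast i'.2
            rw [← hieq] at h3
            linarith
          · intro j hj
            have h3 : ((j:ℕ):ℝ) + 1 ≤ (M:ℝ) := by exact_mod_cast j.2
            rw [← hieq] at h3
            exact ⟨Ioo_inter_empty (Or.inr (by linarith)),
              Ioo_inter_empty (Or.inr (by linarith))⟩
          · left; exact Ioo_inter_empty (Or.inr (by linarith))
    · -- no separation player below p
      refine ⟨⟨0, hM⟩, ?_⟩
      have h00 : σ.symm p < σ.symm (sep (⟨0, hM⟩, 0)) := by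
        rcases (hne_pos (⟨0, hM⟩, 0)).lt_or_gt with h | h
        · exact h
        · exact absurd ⟨_, Finset.mem_filter.2 ⟨Finset.mem_univ _, h⟩⟩ hBe
      have hB : hi p < 2*((0:ℕ):ℝ)+6/5 := by
        have := hup p (⟨0, hM⟩, 0) h00
        simpa [hsB] using this
      intro t ht
      simp only [hPdef, mem_Ioo] at ht
      have h0 := hnn p
      simp only [mem_Ioo]
      push_cast
      constructor
      · linarith [ht.1]
      · linarith [ht.2]
  have hcoordX : ∀ (w : α), w ∈ X → ∀ i : Fin M, w ∈ coords (e i) ↔ (e i).1 = w := by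
    intro w hw i
    simp only [coords, Finset.mem_insert, Finset.mem_singleton]
    constructor
    · rintro (h | h | h)
      · exact h.symm
      · have : w ∈ Y := by rw [h]; exact heY i
        exact absurd this (Finset.disjoint_left.1 hXY hw)
      · have : w ∈ Z := by rw [h]; exact heZ i
        exact absurd this (Finset.disjoint_left.1 hXZ hw)
    · intro h; left; exact h.symm
  have hcoordY : ∀ (w : α), w ∈ Y → ∀ i : Fin M, w ∈ coords (e i) ↔ (e i).2.1 = w := by
    intro w hw i
    simp only [coords, Finset.mem_insert, Finset.mem_singleton]
    constructor
    · rintro (h | h | h)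
      · have : w ∈ X := by rw [h]; exact heX i
        exact absurd hw (Finset.disjoint_left.1 hXY this)
      · exact h.symm
      · have : w ∈ Z := by rw [h]; exact heZ i
        exact absurd this (Finset.disjoint_left.1 hYZ hw)
    · intro h; right; left; exact h.symm
  have hcoordZ : ∀ (w : α), w ∈ Z → ∀ i : Fin M, w ∈ coords (e i) ↔ (e i).2.2 = w := by
    intro w hw i
    simp only [coords, Finset.mem_insert, Finset.mem_singleton]
    constructor
    · rintro (h | h | h)
      · have : w ∈ X := by rw [h]; exact heX i
        exact absurd hw (Finset.disjoint_left.1 hXZ this)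
      · have : w ∈ Y := by rw [h]; exact heY i
        exact absurd hw (Finset.disjoint_left.1 hYZ this)
      · exact h.symm
    · intro h; right; right; exact h.symm
  have hofR : ∀ (l' r' a b d : ℝ), r' - a = d →
      volume (Ioo l' r' ∩ Ioo a b) ≤ ENNReal.ofReal (b - a) := by
    intro l' r' a b d _
    exact vol_inter_Ioo_le _ _ _
  have hblockT : ∀ z : {z // z ∈ Z}, ∃ j : Fin M,
      (e j).2.2 = z.1 ∧ Icc (2*(j:ℝ)+1/4) (2*(j:ℝ)+3/4) ⊆ P (Sum.inl z) := by
    intro z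
    obtain ⟨j, hj⟩ := hblock (Sum.inl z) (fun s h => by simp [hsepdef] at h)
    refine ⟨j, ?_⟩
    have h := hcon' (Sum.inl z)
    rw [show P (Sum.inl z) = Ioo (lo (Sum.inl z)) (hi (Sum.inl z)) from rfl,
      meas_triplet X Y Z e z measurableSet_Ioo] at h
    have hjsub : Ioo (lo (Sum.inl z)) (hi (Sum.inl z)) ⊆
        Ioo (2*(j:ℝ) - 1/5) (2*(j:ℝ) + 6/5) := hj
    have hcomp0 : (∑ j' : Fin M,
        ENNReal.ofReal ((((M:ℝ) - mult e z.1) / (2*(M:ℝ)^2)) / (1/5)) *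
        (volume (Ioo (lo (Sum.inl z)) (hi (Sum.inl z)) ∩ Ioo (2*(j':ℝ)+6/5) (2*(j':ℝ)+7/5)) +
         volume (Ioo (lo (Sum.inl z)) (hi (Sum.inl z)) ∩ Ioo (2*(j':ℝ)+8/5) (2*(j':ℝ)+9/5)))) = 0 := by
      refine Finset.sum_eq_zero fun j' _ => ?_
      have hc1 : Ioo (lo (Sum.inl z)) (hi (Sum.inl z)) ∩
          Ioo (2*(j':ℝ)+6/5) (2*(j':ℝ)+7/5) = ∅ := by
        refine sub_inter_empty hjsub (Ioo_inter_empty ?_)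
        rcases eq_or_ne j' j with rfl | hne
        · left; linarith
        · rcases fin_real_cases j' j hne with hlt | hlt
          · right; linarith
          · left; linarith
      have hc2 : Ioo (lo (Sum.inl z)) (hi (Sum.inl z)) ∩
          Ioo (2*(j':ℝ)+8/5) (2*(j':ℝ)+9/5) = ∅ := by
        refine sub_inter_empty hjsub (Ioo_inter_empty ?_)
        rcases eq_or_ne j' j with rfl | hne
        · left; linarith
        · rcases fin_real_cases j' j hne with hlt | hlt
          · right; linarith
          · left; linarith
      rw [hc1, hc2]
      simp
    rw [hcomp0, add_zero] at h
    rw [Finset.sum_eq_single j] at h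
    · by_cases hzc : z.1 ∈ coords (e j)
      swap
      · rw [if_neg hzc] at h
        simp at h
      rw [if_pos hzc] at h
      refine ⟨(hcoordZ z.1 z.2 j).1 hzc, ?_⟩
      have hq : ENNReal.ofReal (1/(2*(M:ℝ)) / (1/4)) * ENNReal.ofReal (1/4) =
          ENNReal.ofReal (1/(2*(M:ℝ))) := by
        rw [← ENNReal.ofReal_mul (by positivity)]
        congr 1
        field_simp
      have hv1 : volume (Ioo (lo (Sum.inl z)) (hi (Sum.inl z)) ∩
          Ioo (2*(j:ℝ)) (2*(j:ℝ)+1/4)) ≠ 0 := by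
        intro h0
        rw [h0, zero_add] at h
        have hle : volume (Ioo (lo (Sum.inl z)) (hi (Sum.inl z)) ∩
            Ioo (2*(j:ℝ)+3/4) (2*(j:ℝ)+1)) ≤ ENNReal.ofReal (1/4) := by
          refine le_trans (vol_inter_Ioo_le _ _ _) ?_
          rw [show (2*(j:ℝ)+1) - (2*(j:ℝ)+3/4) = 1/4 by ring]
        exact absurd h (not_lt.2 (le_trans (mul_le_mul_right hle _) (le_of_eq hq)))
      have hv2 : volume (Ioo (lo (Sum.inl z)) (hi (Sum.inl z)) ∩
          Ioo (2*(j:ℝ)+3/4) (2*(j:ℝ)+1)) ≠ 0 := by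
        intro h0
        rw [h0, add_zero] at h
        have hle : volume (Ioo (lo (Sum.inl z)) (hi (Sum.inl z)) ∩
            Ioo (2*(j:ℝ)) (2*(j:ℝ)+1/4)) ≤ ENNReal.ofReal (1/4) := by
          refine le_trans (vol_inter_Ioo_le _ _ _) ?_
          rw [show (2*(j:ℝ)+1/4) - (2*(j:ℝ)) = 1/4 by ring]
        exact absurd h (not_lt.2 (le_trans (mul_le_mul_right hle _) (le_of_eq hq)))
      obtain ⟨u, hu⟩ := nonempty_of_measure_ne_zero hv1
      obtain ⟨v, hv⟩ := nonempty_of_measure_ne_zero hv2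
      intro t ht
      simp only [mem_inter_iff, mem_Ioo] at hu hv
      simp only [mem_Icc] at ht
      simp only [hPdef, mem_Ioo]
      constructor
      · linarith [hu.1.1, hu.2.2, ht.1]
      · linarith [hv.1.2, hv.2.1, ht.2]
    · intro i _ hne
      have hc1 : Ioo (lo (Sum.inl z)) (hi (Sum.inl z)) ∩
          Ioo (2*(i:ℝ)) (2*(i:ℝ)+1/4) = ∅ := by
        refine sub_inter_empty hjsub (Ioo_inter_empty ?_)
        rcases fin_real_cases i j hne with hlt | hlt
        · right; linarith
        · left; linarith
      have hc2 : Ioo (lo (Sum.inl z)) (hi (Sum.inl z)) ∩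
          Ioo (2*(i:ℝ)+3/4) (2*(i:ℝ)+1) = ∅ := by
        refine sub_inter_empty hjsub (Ioo_inter_empty ?_)
        rcases fin_real_cases i j hne with hlt | hlt
        · right; linarith
        · left; linarith
      rw [hc1, hc2]
      simp
    · intro hnotmem
      exact absurd (Finset.mem_univ j) hnotmem
  have hblockX : ∀ (x : {x // x ∈ X}) (a : Fin (mult e x.1 - 1)), ∃ j : Fin M,
      (e j).1 = x.1 ∧ ENNReal.ofReal (1/8) <
        volume (Ioo (lo (Sum.inr (Sum.inl ⟨x, a⟩))) (hi (Sum.inr (Sum.inl ⟨x, a⟩))) ∩ Ioo (2*(j:ℝ)+1/4) (2*(j:ℝ)+1/2)) := by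
    intro x a
    obtain ⟨j, hj⟩ := hblock (Sum.inr (Sum.inl ⟨x, a⟩)) (fun s h => by simp [hsepdef] at h)
    refine ⟨j, ?_⟩
    have h := hcon' (Sum.inr (Sum.inl ⟨x, a⟩))
    rw [show P (Sum.inr (Sum.inl ⟨x, a⟩)) = Ioo (lo (Sum.inr (Sum.inl ⟨x, a⟩))) (hi (Sum.inr (Sum.inl ⟨x, a⟩))) from rfl,
      meas_groundX X Y Z e x a measurableSet_Ioo] at h
    have hjsub : Ioo (lo (Sum.inr (Sum.inl ⟨x, a⟩))) (hi (Sum.inr (Sum.inl ⟨x, a⟩))) ⊆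
        Ioo (2*(j:ℝ) - 1/5) (2*(j:ℝ) + 6/5) := hj
    have hcomp0 : (∑ j' : Fin M,
        ENNReal.ofReal ((((M:ℝ) - mult e x.1) / (2*(M:ℝ)^2)) / (1/5)) *
        (volume (Ioo (lo (Sum.inr (Sum.inl ⟨x, a⟩))) (hi (Sum.inr (Sum.inl ⟨x, a⟩))) ∩ Ioo (2*(j':ℝ)+6/5) (2*(j':ℝ)+7/5)) +
         volume (Ioo (lo (Sum.inr (Sum.inl ⟨x, a⟩))) (hi (Sum.inr (Sum.inl ⟨x, a⟩))) ∩ Ioo (2*(j':ℝ)+8/5) (2*(j':ℝ)+9/5)))) = 0 := by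
      refine Finset.sum_eq_zero fun j' _ => ?_
      have hc1 : Ioo (lo (Sum.inr (Sum.inl ⟨x, a⟩))) (hi (Sum.inr (Sum.inl ⟨x, a⟩))) ∩
          Ioo (2*(j':ℝ)+6/5) (2*(j':ℝ)+7/5) = ∅ := by
        refine sub_inter_empty hjsub (Ioo_inter_empty ?_)
        rcases eq_or_ne j' j with rfl | hne
        · left; linarith
        · rcases fin_real_cases j' j hne with hlt | hlt
          · right; linarith
          · left; linarith
      have hc2 : Ioo (lo (Sum.inr (Sum.inl ⟨x, a⟩))) (hi (Sum.inr (Sum.inl ⟨x, a⟩))) ∩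
          Ioo (2*(j':ℝ)+8/5) (2*(j':ℝ)+9/5) = ∅ := by
        refine sub_inter_empty hjsub (Ioo_inter_empty ?_)
        rcases eq_or_ne j' j with rfl | hne
        · left; linarith
        · rcases fin_real_cases j' j hne with hlt | hlt
          · right; linarith
          · left; linarith
      rw [hc1, hc2]
      simp
    rw [hcomp0, add_zero] at h
    rw [Finset.sum_eq_single j] at h
    · by_cases hxc : x.1 ∈ coords (e j)
      swap
      · rw [if_neg hxc] at h
        simp at h
      rw [if_pos hxc] at h
      refine ⟨(hcoordX x.1 x.2 j).1 hxc, ?_⟩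
      by_contra hle
      push_neg at hle
      have hfin : ENNReal.ofReal (1/(M:ℝ) / (1/4)) *
          volume (Ioo (lo (Sum.inr (Sum.inl ⟨x, a⟩))) (hi (Sum.inr (Sum.inl ⟨x, a⟩))) ∩ Ioo (2*(j:ℝ)+1/4) (2*(j:ℝ)+1/2)) ≤
          ENNReal.ofReal (1/(2*(M:ℝ))) := by
        refine le_trans (mul_le_mul_right hle _) ?_
        rw [← ENNReal.ofReal_mul (by positivity)]
        apply le_of_eq
        congr 1
        field_simp
        ring
      exact absurd h (not_lt.2 hfin)
    · intro i _ hne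
      have hc1 : Ioo (lo (Sum.inr (Sum.inl ⟨x, a⟩))) (hi (Sum.inr (Sum.inl ⟨x, a⟩))) ∩
          Ioo (2*(i:ℝ)+1/4) (2*(i:ℝ)+1/2) = ∅ := by
        refine sub_inter_empty hjsub (Ioo_inter_empty ?_)
        rcases fin_real_cases i j hne with hlt | hlt
        · right; linarith
        · left; linarith
      rw [hc1]
      simp
    · intro hnotmem
      exact absurd (Finset.mem_univ j) hnotmem
  have hblockY : ∀ (y : {y // y ∈ Y}) (a : Fin (mult e y.1 - 1)), ∃ j : Fin M,
      (e j).2.1 = y.1 ∧ ENNReal.ofReal (1/8) <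
        volume (Ioo (lo (Sum.inr (Sum.inr (Sum.inl ⟨y, a⟩)))) (hi (Sum.inr (Sum.inr (Sum.inl ⟨y, a⟩)))) ∩ Ioo (2*(j:ℝ)+1/2) (2*(j:ℝ)+3/4)) := by
    intro y a
    obtain ⟨j, hj⟩ := hblock (Sum.inr (Sum.inr (Sum.inl ⟨y, a⟩))) (fun s h => by simp [hsepdef] at h)
    refine ⟨j, ?_⟩
    have h := hcon' (Sum.inr (Sum.inr (Sum.inl ⟨y, a⟩)))
    rw [show P (Sum.inr (Sum.inr (Sum.inl ⟨y, a⟩))) = Ioo (lo (Sum.inr (Sum.inr (Sum.inl ⟨y, a⟩)))) (hi (Sum.inr (Sum.inr (Sum.inl ⟨y, a⟩)))) from rfl,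
      meas_groundY X Y Z e y a measurableSet_Ioo] at h
    have hjsub : Ioo (lo (Sum.inr (Sum.inr (Sum.inl ⟨y, a⟩)))) (hi (Sum.inr (Sum.inr (Sum.inl ⟨y, a⟩)))) ⊆
        Ioo (2*(j:ℝ) - 1/5) (2*(j:ℝ) + 6/5) := hj
    have hcomp0 : (∑ j' : Fin M,
        ENNReal.ofReal ((((M:ℝ) - mult e y.1) / (2*(M:ℝ)^2)) / (1/5)) *
        (volume (Ioo (lo (Sum.inr (Sum.inr (Sum.inl ⟨y, a⟩)))) (hi (Sum.inr (Sum.inr (Sum.inl ⟨y, a⟩)))) ∩ Ioo (2*(j':ℝ)+6/5) (2*(j':ℝ)+7/5)) +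
         volume (Ioo (lo (Sum.inr (Sum.inr (Sum.inl ⟨y, a⟩)))) (hi (Sum.inr (Sum.inr (Sum.inl ⟨y, a⟩)))) ∩ Ioo (2*(j':ℝ)+8/5) (2*(j':ℝ)+9/5)))) = 0 := by
      refine Finset.sum_eq_zero fun j' _ => ?_
      have hc1 : Ioo (lo (Sum.inr (Sum.inr (Sum.inl ⟨y, a⟩)))) (hi (Sum.inr (Sum.inr (Sum.inl ⟨y, a⟩)))) ∩
          Ioo (2*(j':ℝ)+6/5) (2*(j':ℝ)+7/5) = ∅ := by
        refine sub_inter_empty hjsub (Ioo_inter_empty ?_)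
        rcases eq_or_ne j' j with rfl | hne
        · left; linarith
        · rcases fin_real_cases j' j hne with hlt | hlt
          · right; linarith
          · left; linarith
      have hc2 : Ioo (lo (Sum.inr (Sum.inr (Sum.inl ⟨y, a⟩)))) (hi (Sum.inr (Sum.inr (Sum.inl ⟨y, a⟩)))) ∩
          Ioo (2*(j':ℝ)+8/5) (2*(j':ℝ)+9/5) = ∅ := by
        refine sub_inter_empty hjsub (Ioo_inter_empty ?_)
        rcases eq_or_ne j' j with rfl | hne
        · left; linarith
        · rcases fin_real_cases j' j hne with hlt | hlt
          · right; linarith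
          · left; linarith
      rw [hc1, hc2]
      simp
    rw [hcomp0, add_zero] at h
    rw [Finset.sum_eq_single j] at h
    · by_cases hxc : y.1 ∈ coords (e j)
      swap
      · rw [if_neg hxc] at h
        simp at h
      rw [if_pos hxc] at h
      refine ⟨(hcoordY y.1 y.2 j).1 hxc, ?_⟩
      by_contra hle
      push_neg at hle
      have hfin : ENNReal.ofReal (1/(M:ℝ) / (1/4)) *
          volume (Ioo (lo (Sum.inr (Sum.inr (Sum.inl ⟨y, a⟩)))) (hi (Sum.inr (Sum.inr (Sum.inl ⟨y, a⟩)))) ∩ Ioo (2*(j:ℝ)+1/2) (2*(j:ℝ)+3/4)) ≤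
          ENNReal.ofReal (1/(2*(M:ℝ))) := by
        refine le_trans (mul_le_mul_right hle _) ?_
        rw [← ENNReal.ofReal_mul (by positivity)]
        apply le_of_eq
        congr 1
        field_simp
        ring
      exact absurd h (not_lt.2 hfin)
    · intro i _ hne
      have hc1 : Ioo (lo (Sum.inr (Sum.inr (Sum.inl ⟨y, a⟩)))) (hi (Sum.inr (Sum.inr (Sum.inl ⟨y, a⟩)))) ∩
          Ioo (2*(i:ℝ)+1/2) (2*(i:ℝ)+3/4) = ∅ := by
        refine sub_inter_empty hjsub (Ioo_inter_empty ?_)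
        rcases fin_real_cases i j hne with hlt | hlt
        · right; linarith
        · left; linarith
      rw [hc1]
      simp
    · intro hnotmem
      exact absurd (Finset.mem_univ j) hnotmem
  choose bz hbz1 hbz2 using hblockT
  choose bx hbx1 hbx2 using hblockX
  choose byf hby1 hby2 using hblockY
  set T : Finset (Fin M) := Finset.image bz Finset.univ with hT
  have hbzinj : Function.Injective bz := by
    intro z z' hzz
    by_contra hne
    have hplayers : (Sum.inl z : DMPlayer X Y Z e) ≠ Sum.inl z' := by simp [hne]
    have hmem : (2*((bz z : Fin M):ℝ)+1/2) ∈
        Icc (2*((bz z : Fin M):ℝ)+1/4) (2*((bz z : Fin M):ℝ)+3/4) := by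
      simp only [mem_Icc]
      constructor <;> linarith
    have hmem' : (2*((bz z : Fin M):ℝ)+1/2) ∈
        Icc (2*((bz z' : Fin M):ℝ)+1/4) (2*((bz z' : Fin M):ℝ)+3/4) := by
      rw [← hzz]; exact hmem
    exact hdisj _ _ hplayers _ (hbz2 z hmem) (hbz2 z' hmem')
  have hTcard : T.card = n' := by
    rw [hT, Finset.card_image_of_injective _ hbzinj, Finset.card_univ, Fintype.card_coe, hZ]
  have hxnotT : ∀ (x : {x // x ∈ X}) (a : Fin (mult e x.1 - 1)), bx x a ∉ T := by
    intro x a hmem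
    rw [hT, Finset.mem_image] at hmem
    obtain ⟨z, _, hz⟩ := hmem
    have h2 := hbx2 x a
    have hne0 : volume (Ioo (lo (Sum.inr (Sum.inl ⟨x, a⟩))) (hi (Sum.inr (Sum.inl ⟨x, a⟩))) ∩
        Ioo (2*((bx x a : Fin M):ℝ)+1/4) (2*((bx x a : Fin M):ℝ)+1/2)) ≠ 0 := by
      intro h0; rw [h0] at h2; simp at h2
    obtain ⟨t, ht1, ht2⟩ := nonempty_of_measure_ne_zero hne0
    have htIcc : t ∈ Icc (2*((bz z : Fin M):ℝ)+1/4) (2*((bz z : Fin M):ℝ)+3/4) := by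
      rw [hz]
      simp only [mem_Ioo] at ht2
      simp only [mem_Icc]
      constructor <;> linarith [ht2.1, ht2.2]
    exact hdisj (Sum.inr (Sum.inl ⟨x, a⟩)) (Sum.inl z) (by simp) t ht1 (hbz2 z htIcc)
  have hynotT : ∀ (y : {y // y ∈ Y}) (a : Fin (mult e y.1 - 1)), byf y a ∉ T := by
    intro y a hmem
    rw [hT, Finset.mem_image] at hmem
    obtain ⟨z, _, hz⟩ := hmem
    have h2 := hby2 y a
    have hne0 : volume (Ioo (lo (Sum.inr (Sum.inr (Sum.inl ⟨y, a⟩)))) (hi (Sum.inr (Sum.inr (Sum.inl ⟨y, a⟩)))) ∩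
        Ioo (2*((byf y a : Fin M):ℝ)+1/2) (2*((byf y a : Fin M):ℝ)+3/4)) ≠ 0 := by
      intro h0; rw [h0] at h2; simp at h2
    obtain ⟨t, ht1, ht2⟩ := nonempty_of_measure_ne_zero hne0
    have htIcc : t ∈ Icc (2*((bz z : Fin M):ℝ)+1/4) (2*((bz z : Fin M):ℝ)+3/4) := by
      rw [hz]
      simp only [mem_Ioo] at ht2
      simp only [mem_Icc]
      constructor <;> linarith [ht2.1, ht2.2]
    exact hdisj (Sum.inr (Sum.inr (Sum.inl ⟨y, a⟩))) (Sum.inl z) (by simp) t ht1 (hbz2 z htIcc)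
  have hbxsinj : Function.Injective
      (fun q : (Σ x : {x // x ∈ X}, Fin (mult e x.1 - 1)) => bx q.1 q.2) := by
    rintro ⟨x, a⟩ ⟨x', a'⟩ hq
    simp only at hq
    have hx : x = x' := by
      apply Subtype.ext
      rw [← hbx1 x a, ← hbx1 x' a', hq]
    subst hx
    by_contra hne
    have hanea : a ≠ a' := by
      intro h; exact hne (by rw [h])
    have hplayers : (Sum.inr (Sum.inl ⟨x, a⟩) : DMPlayer X Y Z e) ≠
        Sum.inr (Sum.inl ⟨x, a'⟩) := by
      simp [hanea]
    have h1 := hbx2 x a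
    have h2 := hbx2 x a'
    rw [hq] at h1
    set j := bx x a' with hjdef
    set A1 := Ioo (lo (Sum.inr (Sum.inl ⟨x, a⟩))) (hi (Sum.inr (Sum.inl ⟨x, a⟩))) ∩
        Ioo (2*((j : Fin M):ℝ)+1/4) (2*((j : Fin M):ℝ)+1/2) with hA1
    set A2 := Ioo (lo (Sum.inr (Sum.inl ⟨x, a'⟩))) (hi (Sum.inr (Sum.inl ⟨x, a'⟩))) ∩
        Ioo (2*((j : Fin M):ℝ)+1/4) (2*((j : Fin M):ℝ)+1/2) with hA2
    have hdisjset : Disjoint A1 A2 := by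
      rw [Set.disjoint_left]
      intro t ht1 ht2
      exact hdisj _ _ hplayers t ht1.1 ht2.1
    have hunion := measure_union (μ := volume) hdisjset
      (measurableSet_Ioo.inter measurableSet_Ioo)
    have hsub : A1 ∪ A2 ⊆ Ioo (2*((j : Fin M):ℝ)+1/4) (2*((j : Fin M):ℝ)+1/2) :=
      union_subset inter_subset_right inter_subset_right
    have hle := measure_mono (μ := volume) hsub
    rw [hunion, Real.volume_Ioo,
      show (2*((j : Fin M):ℝ)+1/2) - (2*((j : Fin M):ℝ)+1/4) = 1/4 by ring] at hle
    have hlt := ENNReal.add_lt_add h1 h2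
    rw [← ENNReal.ofReal_add (by norm_num) (by norm_num),
      show (1:ℝ)/8 + 1/8 = 1/4 by norm_num] at hlt
    exact absurd hle (not_le.2 hlt)
  have hbysinj : Function.Injective
      (fun q : (Σ y : {y // y ∈ Y}, Fin (mult e y.1 - 1)) => byf q.1 q.2) := by
    rintro ⟨y, a⟩ ⟨y', a'⟩ hq
    simp only at hq
    have hy : y = y' := by
      apply Subtype.ext
      rw [← hby1 y a, ← hby1 y' a', hq]
    subst hy
    by_contra hne
    have hanea : a ≠ a' := by
      intro h; exact hne (by rw [h])
    have hplayers : (Sum.inr (Sum.inr (Sum.inl ⟨y, a⟩)) : DMPlayer X Y Z e) ≠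
        Sum.inr (Sum.inr (Sum.inl ⟨y, a'⟩)) := by
      simp [hanea]
    have h1 := hby2 y a
    have h2 := hby2 y a'
    rw [hq] at h1
    set j := byf y a' with hjdef
    set A1 := Ioo (lo (Sum.inr (Sum.inr (Sum.inl ⟨y, a⟩)))) (hi (Sum.inr (Sum.inr (Sum.inl ⟨y, a⟩)))) ∩
        Ioo (2*((j : Fin M):ℝ)+1/2) (2*((j : Fin M):ℝ)+3/4) with hA1
    set A2 := Ioo (lo (Sum.inr (Sum.inr (Sum.inl ⟨y, a'⟩)))) (hi (Sum.inr (Sum.inr (Sum.inl ⟨y, a'⟩)))) ∩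
        Ioo (2*((j : Fin M):ℝ)+1/2) (2*((j : Fin M):ℝ)+3/4) with hA2
    have hdisjset : Disjoint A1 A2 := by
      rw [Set.disjoint_left]
      intro t ht1 ht2
      exact hdisj _ _ hplayers t ht1.1 ht2.1
    have hunion := measure_union (μ := volume) hdisjset
      (measurableSet_Ioo.inter measurableSet_Ioo)
    have hsub : A1 ∪ A2 ⊆ Ioo (2*((j : Fin M):ℝ)+1/2) (2*((j : Fin M):ℝ)+3/4) :=
      union_subset inter_subset_right inter_subset_right
    have hle := measure_mono (μ := volume) hsub
    rw [hunion, Real.volume_Ioo,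
      show (2*((j : Fin M):ℝ)+3/4) - (2*((j : Fin M):ℝ)+1/2) = 1/4 by ring] at hle
    have hlt := ENNReal.add_lt_add h1 h2
    rw [← ENNReal.ofReal_add (by norm_num) (by norm_num),
      show (1:ℝ)/8 + 1/8 = 1/4 by norm_num] at hlt
    exact absurd hle (not_le.2 hlt)
  have hsummult : ∑ x ∈ X, mult e x = M := by
    have hone : ∀ i : Fin M, (X.filter (fun w => w ∈ coords (e i))).card = 1 := by
      intro i
      rw [Finset.card_eq_one]
      refine ⟨(e i).1, ?_⟩
      ext w
      simp only [Finset.mem_filter, Finset.mem_singleton]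
      constructor
      · rintro ⟨hw, hc⟩
        exact ((hcoordX w hw i).1 hc).symm
      · rintro rfl
        exact ⟨heX i, by simp [coords]⟩
    calc ∑ x ∈ X, mult e x
        = ∑ x ∈ X, ∑ i : Fin M, if x ∈ coords (e i) then 1 else 0 := by
          refine Finset.sum_congr rfl fun x _ => ?_
          rw [mult, Finset.card_filter]
      _ = ∑ i : Fin M, ∑ x ∈ X, if x ∈ coords (e i) then 1 else 0 := Finset.sum_comm
      _ = ∑ _i : Fin M, 1 := by
          refine Finset.sum_congr rfl fun i _ => ?_
          rw [← Finset.card_filter, hone i]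
      _ = M := by simp
  have hsummultY : ∑ y ∈ Y, mult e y = M := by
    have hone : ∀ i : Fin M, (Y.filter (fun w => w ∈ coords (e i))).card = 1 := by
      intro i
      rw [Finset.card_eq_one]
      refine ⟨(e i).2.1, ?_⟩
      ext w
      simp only [Finset.mem_filter, Finset.mem_singleton]
      constructor
      · rintro ⟨hw, hc⟩
        exact ((hcoordY w hw i).1 hc).symm
      · rintro rfl
        exact ⟨heY i, by simp [coords]⟩
    calc ∑ y ∈ Y, mult e y
        = ∑ y ∈ Y, ∑ i : Fin M, if y ∈ coords (e i) then 1 else 0 := by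
          refine Finset.sum_congr rfl fun y _ => ?_
          rw [mult, Finset.card_filter]
      _ = ∑ i : Fin M, ∑ y ∈ Y, if y ∈ coords (e i) then 1 else 0 := Finset.sum_comm
      _ = ∑ _i : Fin M, 1 := by
          refine Finset.sum_congr rfl fun i _ => ?_
          rw [← Finset.card_filter, hone i]
      _ = M := by simp
  have hcardSigmaX : Fintype.card (Σ x : {x // x ∈ X}, Fin (mult e x.1 - 1)) = M - n' := by
    rw [Fintype.card_sigma]
    simp only [Fintype.card_fin]
    rw [Finset.univ_eq_attach, Finset.sum_attach X (fun w => mult e w - 1)]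
    have h1 : ∑ x ∈ X, (mult e x - 1) + n' = M := by
      have h2 : ∑ x ∈ X, (mult e x - 1) + n' = ∑ x ∈ X, mult e x := by
        rw [← hX, Finset.card_eq_sum_ones, ← Finset.sum_add_distrib]
        refine Finset.sum_congr rfl fun x hx => ?_
        have := hmult x (Finset.mem_union_left _ (Finset.mem_union_left _ hx))
        omega
      rw [h2, hsummult]
    omega
  have hcardSigmaY : Fintype.card (Σ y : {y // y ∈ Y}, Fin (mult e y.1 - 1)) = M - n' := by
    rw [Fintype.card_sigma]
    simp only [Fintype.card_fin]
    rw [Finset.univ_eq_attach, Finset.sum_attach Y (fun w => mult e w - 1)]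
    have h1 : ∑ x ∈ Y, (mult e x - 1) + n' = M := by
      have h2 : ∑ x ∈ Y, (mult e x - 1) + n' = ∑ x ∈ Y, mult e x := by
        rw [← hY, Finset.card_eq_sum_ones, ← Finset.sum_add_distrib]
        refine Finset.sum_congr rfl fun x hx => ?_
        have := hmult x (Finset.mem_union_left _ (Finset.mem_union_right _ hx))
        omega
      rw [h2, hsummultY]
    omega
  set XB : Finset (Fin M) := Finset.image
    (fun q : (Σ x : {x // x ∈ X}, Fin (mult e x.1 - 1)) => bx q.1 q.2) Finset.univ with hXB
  set YB : Finset (Fin M) := Finset.image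
    (fun q : (Σ y : {y // y ∈ Y}, Fin (mult e y.1 - 1)) => byf q.1 q.2) Finset.univ with hYB
  have hXBcard : XB.card = M - n' := by
    rw [hXB, Finset.card_image_of_injective _ hbxsinj, Finset.card_univ, hcardSigmaX]
  have hYBcard : YB.card = M - n' := by
    rw [hYB, Finset.card_image_of_injective _ hbysinj, Finset.card_univ, hcardSigmaY]
  have hXBsub : XB ⊆ Tᶜ := by
    intro j hj
    rw [Finset.mem_compl]
    obtain ⟨q, _, hq⟩ := Finset.mem_image.1 hj
    rw [← hq]
    exact hxnotT q.1 q.2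
  have hYBsub : YB ⊆ Tᶜ := by
    intro j hj
    rw [Finset.mem_compl]
    obtain ⟨q, _, hq⟩ := Finset.mem_image.1 hj
    rw [← hq]
    exact hynotT q.1 q.2
  have hXBeq : XB = Tᶜ := by
    refine Finset.eq_of_subset_of_card_le hXBsub ?_
    rw [Finset.card_compl, hXBcard, hTcard, Fintype.card_fin]
  have hYBeq : YB = Tᶜ := by
    refine Finset.eq_of_subset_of_card_le hYBsub ?_
    rw [Finset.card_compl, hYBcard, hTcard, Fintype.card_fin]
  apply hnocover
  refine ⟨T, hTcard, ?_⟩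
  intro w hw
  rcases Finset.mem_union.1 hw with hw' | hwz
  · rcases Finset.mem_union.1 hw' with hwx | hwy
    · by_contra hno
      push_neg at hno
      set Sx := Finset.univ.filter (fun j : Fin M => (e j).1 = w) with hSx
      have hSxcard : Sx.card = mult e w := by
        rw [hSx, mult]
        congr 1
        ext j
        simp [hcoordX w hwx j]
      have hSxsub : Sx ⊆ XB := by
        rw [hXBeq]
        intro j hj
        rw [Finset.mem_compl]
        intro hjT
        exact hno j hjT ((hcoordX w hwx j).2 (Finset.mem_filter.1 hj).2)
      have hSxsub2 : Sx ⊆ Finset.image (fun a : Fin (mult e w - 1) => bx ⟨w, hwx⟩ a)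
          Finset.univ := by
        intro j hj
        obtain ⟨q, _, hq⟩ := Finset.mem_image.1 (hSxsub hj)
        obtain ⟨x1, a⟩ := q
        have hqx : x1 = ⟨w, hwx⟩ := by
          apply Subtype.ext
          have h1 := hbx1 x1 a
          rw [hq] at h1
          rw [← h1]
          exact (Finset.mem_filter.1 hj).2
        subst hqx
        exact Finset.mem_image.2 ⟨a, Finset.mem_univ _, hq⟩
      have hcard2 : Sx.card ≤ mult e w - 1 := by
        refine le_trans (Finset.card_le_card hSxsub2) ?_
        refine le_trans Finset.card_image_le ?_
        simp
      have hmw := hmult w hw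
      omega
    · by_contra hno
      push_neg at hno
      set Sy := Finset.univ.filter (fun j : Fin M => (e j).2.1 = w) with hSy
      have hSycard : Sy.card = mult e w := by
        rw [hSy, mult]
        congr 1
        ext j
        simp [hcoordY w hwy j]
      have hSysub : Sy ⊆ YB := by
        rw [hYBeq]
        intro j hj
        rw [Finset.mem_compl]
        intro hjT
        exact hno j hjT ((hcoordY w hwy j).2 (Finset.mem_filter.1 hj).2)
      have hSysub2 : Sy ⊆ Finset.image (fun a : Fin (mult e w - 1) => byf ⟨w, hwy⟩ a)
          Finset.univ := by
        intro j hj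
        obtain ⟨q, _, hq⟩ := Finset.mem_image.1 (hSysub hj)
        obtain ⟨y1, a⟩ := q
        have hqy : y1 = ⟨w, hwy⟩ := by
          apply Subtype.ext
          have h1 := hby1 y1 a
          rw [hq] at h1
          rw [← h1]
          exact (Finset.mem_filter.1 hj).2
        subst hqy
        exact Finset.mem_image.2 ⟨a, Finset.mem_univ _, hq⟩
      have hcard2 : Sy.card ≤ mult e w - 1 := by
        refine le_trans (Finset.card_le_card hSysub2) ?_
        refine le_trans Finset.card_image_le ?_
        simp
      have hmw := hmult w hw
      omega
  · refine ⟨bz ⟨w, hwz⟩, Finset.mem_image.2 ⟨⟨w, hwz⟩, Finset.mem_univ _, rfl⟩, ?_⟩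
    rw [hcoordZ w hwz]
    exact hbz1 ⟨w, hwz⟩
end
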